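/- arXiv:2605.12615 — 7 statements merged into one kernel-verified Lean document; each statement's English description precedes it below -/
import Mathlib

section
/- Let n ≥ 1 and let T be an n×n complex unitary matrix such that for every vector z ∈ ℂⁿ one has ∑_{i=1}^n ((Tz)_i)³ = ∑_{i=1}^n (z_i)³. Then there exist a permutation σ of {1,…,n} and complex numbers d₁,…,dₙ with |d_i| = 1 for every i such that T = P_σ · D, where P_σ is the permutation matrix of σ and D = diag(d₁,…,dₙ). -/
open Matrix

/-- If a unitary `T` preserves the sum of cubes of coordinates,
then `T` is a permutation matrix times a diagonal phase matrix. -/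
theorem cube_preserving_unitary_is_perm_times_phase
    {n : ℕ} (hn : 1 ≤ n) (T : Matrix (Fin n) (Fin n) ℂ)
    (hT : T ∈ Matrix.unitaryGroup (Fin n) ℂ)
    (hpres : ∀ z : Fin n → ℂ, ∑ i, (T.mulVec z i) ^ 3 = ∑ i, (z i) ^ 3) :
    ∃ (σ : Equiv.Perm (Fin n)) (d : Fin n → ℂ),
      (∀ i, ‖d i‖ = 1) ∧
      T = (Matrix.of fun i j => if i = σ j then (1 : ℂ) else 0) * Matrix.diagonal d := by
  classical
  have hstar : star T * T = 1 := hT.1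
  -- columns are orthonormal
  have key : ∀ j k : Fin n, ∑ i, (starRingEnd ℂ) (T i j) * T i k =
      if j = k then (1 : ℂ) else 0 := by
    intro j k
    have := congrFun (congrFun hstar j) k
    simpa [Matrix.mul_apply, Matrix.star_apply, Matrix.one_apply] using this
  -- column sums of cubes are 1
  have hc : ∀ j : Fin n, ∑ i, (T i j) ^ 3 = 1 := by
    intro j
    have h := hpres (Pi.single j 1)
    rw [Matrix.mulVec_single_one] at h
    simp only [Matrix.col_apply] at h
    rw [h]
    rw [Finset.sum_eq_single j]
    · simp
    · intro b _ hb
      simp [Pi.single_eq_of_ne hb]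
    · simp
  -- column L² norms are 1
  have h2 : ∀ j : Fin n, ∑ i, ‖T i j‖ ^ 2 = 1 := by
    intro j
    have h := key j j
    rw [if_pos rfl] at h
    have : ∑ i, ((‖T i j‖ ^ 2 : ℝ) : ℂ) = 1 := by
      rw [← h]
      refine Finset.sum_congr rfl fun i _ => ?_
      rw [Complex.conj_mul']
      norm_cast
    rw [← Complex.ofReal_sum] at this
    exact_mod_cast this
  -- each column has exactly one nonzero entry, of modulus 1
  have col : ∀ j : Fin n, ∃ i, ‖T i j‖ = 1 ∧ ∀ i', i' ≠ i → T i' j = 0 := by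
    intro j
    set a : Fin n → ℝ := fun i => ‖T i j‖ with ha
    have ha0 : ∀ i, 0 ≤ a i := fun i => norm_nonneg _
    have ha2 : ∑ i, a i ^ 2 = 1 := h2 j
    -- each a i ≤ 1
    have hle1 : ∀ i, a i ≤ 1 := by
      intro i
      have : a i ^ 2 ≤ 1 := by
        rw [← ha2]
        exact Finset.single_le_sum (fun i _ => sq_nonneg (a i)) (Finset.mem_univ i)
      nlinarith [ha0 i]
    -- 1 ≤ ∑ a i ^ 3
    have h3 : (1 : ℝ) ≤ ∑ i, a i ^ 3 := by
      have h1 : ‖∑ i, (T i j) ^ 3‖ = 1 := by rw [hc j]; simp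
      calc (1 : ℝ) = ‖∑ i, (T i j) ^ 3‖ := h1.symm
        _ ≤ ∑ i, ‖(T i j) ^ 3‖ := norm_sum_le _ _
        _ = ∑ i, a i ^ 3 := by
            refine Finset.sum_congr rfl fun i _ => ?_
            rw [norm_pow]
    -- ∑ a i ^ 3 ≤ ∑ a i ^ 2 = 1
    have h4 : ∑ i, a i ^ 3 ≤ ∑ i, a i ^ 2 :=
      Finset.sum_le_sum fun i _ => pow_le_pow_of_le_one (ha0 i) (hle1 i) (by norm_num)
    have heq : ∑ i, (a i ^ 2 - a i ^ 3) = 0 := by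
      rw [Finset.sum_sub_distrib, ha2]
      linarith
    have hterm : ∀ i, a i ^ 2 = a i ^ 3 := by
      intro i
      have := (Finset.sum_eq_zero_iff_of_nonneg
        (fun i (_ : i ∈ Finset.univ) => sub_nonneg.mpr
          (pow_le_pow_of_le_one (ha0 i) (hle1 i) (by norm_num)))).mp heq i (Finset.mem_univ i)
      linarith
    have h01 : ∀ i, a i = 0 ∨ a i = 1 := by
      intro i
      have h := hterm i
      rcases eq_or_ne (a i) 0 with h0 | h0
      · exact Or.inl h0
      · right
        have : a i ^ 2 * (1 - a i) = 0 := by ring_nf; nlinarith [hterm i]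
        rcases mul_eq_zero.mp this with h' | h'
        · exact absurd (pow_eq_zero_iff (by norm_num) |>.mp h') h0
        · linarith
    -- existence
    have hex : ∃ i, a i = 1 := by
      by_contra hno
      push_neg at hno
      have : ∀ i, a i = 0 := fun i => (h01 i).resolve_right (hno i)
      have : ∑ i, a i ^ 2 = 0 := Finset.sum_eq_zero fun i _ => by rw [this i]; ring
      rw [ha2] at this
      norm_num at this
    obtain ⟨i, hi⟩ := hex
    refine ⟨i, hi, fun i' hi' => ?_⟩
    rcases h01 i' with h0 | h1
    · exact norm_eq_zero.mp h0
    · exfalso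
      have hsub : ({i, i'} : Finset (Fin n)) ⊆ Finset.univ := Finset.subset_univ _
      have : (2 : ℝ) ≤ ∑ k, a k ^ 2 := by
        calc (2 : ℝ) = ∑ k ∈ ({i, i'} : Finset (Fin n)), a k ^ 2 := by
              rw [Finset.sum_pair (Ne.symm hi')]
              rw [hi, h1]; norm_num
          _ ≤ ∑ k, a k ^ 2 :=
              Finset.sum_le_sum_of_subset_of_nonneg hsub fun k _ _ => sq_nonneg _
      rw [ha2] at this
      norm_num at this
  -- define the map j ↦ row index of the nonzero entry
  set f : Fin n → Fin n := fun j => (col j).choose with hf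
  have hfabs : ∀ j, ‖T (f j) j‖ = 1 := fun j => (col j).choose_spec.1
  have hfzero : ∀ j i', i' ≠ f j → T i' j = 0 := fun j => (col j).choose_spec.2
  have hinj : Function.Injective f := by
    intro j k hjk
    by_contra hne
    have horth := key j k
    rw [if_neg hne] at horth
    have : ∑ i, (starRingEnd ℂ) (T i j) * T i k =
        (starRingEnd ℂ) (T (f j) j) * T (f j) k := by
      rw [Finset.sum_eq_single (f j)]
      · intro b _ hb
        rw [hfzero j b hb]; simp
      · simp
    rw [this] at horth
    rcases mul_eq_zero.mp horth with h' | h'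
    · have : T (f j) j = 0 := by
        simpa using congrArg (starRingEnd ℂ) h'
      have h1 := hfabs j
      rw [this] at h1
      simp at h1
    · have : ‖T (f j) k‖ = 1 := by rw [hjk]; exact hfabs k
      rw [h'] at this
      simp at this
  have hbij : Function.Bijective f := Finite.injective_iff_bijective.mp hinj
  refine ⟨Equiv.ofBijective f hbij, fun j => T (f j) j, fun j => hfabs j, ?_⟩
  ext i j
  rw [Matrix.mul_apply]
  rw [Finset.sum_eq_single j]
  · simp only [Matrix.of_apply, Matrix.diagonal_apply_eq, Equiv.ofBijective_apply]
    rcases eq_or_ne i (f j) with h | h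
    · rw [if_pos h, h, one_mul]
    · rw [if_neg h, zero_mul, hfzero j i h]
  · intro b _ hb
    simp [Matrix.diagonal_apply_ne _ hb]
  · simp
end

section
/- Let n ≥ 1, let U be an n×n complex unitary matrix, and let δ > 0 satisfy n·δ < 1 − √2/2. If (1/n)·|∑_{i,k} (U_{ik})³| ≥ 1 − δ, then there exist a permutation σ of {1,…,n} and complex numbers d₁,…,dₙ with |d_k| = 1 for every k such that ‖U − P_σ·D‖_F ≤ √(3nδ), where P_σ is the permutation matrix of σ and D = diag(d₁,…,dₙ). -/
open Matrix

/-- If the normalized sum of cubes of entries of a unitary `U` is close to 1,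
then `U` is (in Frobenius norm) close to a permutation matrix times a diagonal phase matrix. -/
theorem unitary_close_to_perm_times_phase_of_cube_sum_large
    {n : ℕ} (hn : 1 ≤ n) (U : Matrix (Fin n) (Fin n) ℂ)
    (hU : U ∈ Matrix.unitaryGroup (Fin n) ℂ)
    (δ : ℝ) (hδ : 0 < δ) (hnδ : (n : ℝ) * δ < 1 - Real.sqrt 2 / 2)
    (hsum : (1 / (n : ℝ)) * ‖∑ i, ∑ k, (U i k) ^ 3‖ ≥ 1 - δ) :
    ∃ (σ : Equiv.Perm (Fin n)) (d : Fin n → ℂ),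
      (∀ k, ‖d k‖ = 1) ∧
      Real.sqrt (∑ i, ∑ k, ‖
          (U - (Matrix.of fun i j => if i = σ j then (1 : ℂ) else 0) * Matrix.diagonal d) i k‖ ^ 2)
        ≤ Real.sqrt (3 * n * δ) := by
  haveI : NeZero n := ⟨by omega⟩
  have hnpos : (0:ℝ) < n := by exact_mod_cast hn
  -- column and row norms
  have hcol : ∀ k, ∑ i, ‖U i k‖ ^ 2 = 1 := by
    intro k
    have h := congrFun (congrFun hU.1 k) k
    rw [Matrix.mul_apply, Matrix.one_apply_eq] at h
    have h2 : ∑ i, ((‖U i k‖ ^ 2 : ℝ) : ℂ) = 1 := by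
      rw [← h]
      exact Finset.sum_congr rfl fun i _ => by
        simp [Matrix.star_apply, Complex.sq_norm, Complex.normSq_eq_conj_mul_self]
    exact_mod_cast h2
  have hrow : ∀ i, ∑ k, ‖U i k‖ ^ 2 = 1 := by
    intro i
    have h := congrFun (congrFun hU.2 i) i
    rw [Matrix.mul_apply, Matrix.one_apply_eq] at h
    have h2 : ∑ k, ((‖U i k‖ ^ 2 : ℝ) : ℂ) = 1 := by
      rw [← h]
      exact Finset.sum_congr rfl fun k _ => by
        simp [Matrix.star_apply, Complex.sq_norm, Complex.mul_conj]
    exact_mod_cast h2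
  -- choose the max-entry row in each column
  have hmax : ∀ k : Fin n, ∃ i, ∀ j, ‖U j k‖ ≤ ‖U i k‖ :=
    fun k => Finite.exists_max _
  choose τ hτ using hmax
  set m : Fin n → ℝ := fun k => ‖U (τ k) k‖ with hm
  have hm0 : ∀ k, 0 ≤ m k := fun k => norm_nonneg _
  have hm1 : ∀ k, m k ≤ 1 := by
    intro k
    nlinarith [hcol k, Finset.single_le_sum (f := fun i => ‖U i k‖ ^ 2)
      (fun i _ => sq_nonneg _) (Finset.mem_univ (τ k)), hm0 k]
  -- cube sum bound gives ∑ m ≥ n (1 - δ)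
  have hcube : ∀ k, ∑ i, ‖U i k‖ ^ 3 ≤ m k := by
    intro k
    calc ∑ i, ‖U i k‖ ^ 3
        ≤ ∑ i, m k * ‖U i k‖ ^ 2 := by
          refine Finset.sum_le_sum fun i _ => ?_
          have := hτ k i
          nlinarith [norm_nonneg (U i k)]
      _ = m k := by rw [← Finset.mul_sum, hcol k, mul_one]
  have hsum_m : (n : ℝ) * (1 - δ) ≤ ∑ k, m k := by
    have h1 : ‖∑ i, ∑ k, (U i k) ^ 3‖ ≤ ∑ k, m k := by
      calc ‖∑ i, ∑ k, (U i k) ^ 3‖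
          ≤ ∑ i, ∑ k, ‖(U i k) ^ 3‖ := by
            refine (norm_sum_le _ _).trans (Finset.sum_le_sum fun i _ => ?_)
            exact norm_sum_le _ _
        _ = ∑ k, ∑ i, ‖U i k‖ ^ 3 := by
            rw [Finset.sum_comm]
            exact Finset.sum_congr rfl fun k _ => Finset.sum_congr rfl fun i _ => by
              rw [norm_pow]
        _ ≤ ∑ k, m k := Finset.sum_le_sum fun k _ => hcube k
    have h2 : (n : ℝ) * (1 - δ) ≤ ‖∑ i, ∑ k, (U i k) ^ 3‖ := by
      have h := hsum
      rw [ge_iff_le, one_div, inv_mul_eq_div, le_div_iff₀ hnpos] at h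
      linarith
    linarith
  -- every m k is close to 1
  have hmbig : ∀ k, 1 - (n : ℝ) * δ ≤ m k := by
    intro k
    have hle : ∑ j ∈ Finset.univ.erase k, m j ≤ (n : ℝ) - 1 := by
      have h := Finset.sum_le_card_nsmul (Finset.univ.erase k) m 1 (fun j _ => hm1 j)
      simp only [nsmul_eq_mul, mul_one] at h
      have hc : ((Finset.univ.erase k).card : ℝ) = (n:ℝ) - 1 := by
        rw [Finset.card_erase_of_mem (Finset.mem_univ k), Finset.card_univ, Fintype.card_fin,
          Nat.cast_sub hn, Nat.cast_one]
      rw [hc] at h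
      exact h
    have hsplit : m k + ∑ j ∈ Finset.univ.erase k, m j = ∑ j, m j :=
      Finset.add_sum_erase _ m (Finset.mem_univ k)
    nlinarith [hsum_m]
  have hs2 : Real.sqrt 2 / 2 > 0 := by positivity
  have hmhalf : ∀ k, 1/2 < m k ^ 2 := by
    intro k
    have h1 : Real.sqrt 2 / 2 < m k := by have := hmbig k; linarith
    nlinarith [Real.sq_sqrt (by norm_num : (0:ℝ) ≤ 2), Real.sqrt_nonneg 2]
  -- τ is injective
  have hinj : Function.Injective τ := by
    intro k k' hkk'
    by_contra hne
    have h2 : m k ^ 2 + m k' ^ 2 ≤ 1 := by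
      rw [← hrow (τ k)]
      calc m k ^ 2 + m k' ^ 2
          = ∑ j ∈ ({k, k'} : Finset (Fin n)), ‖U (τ k) j‖ ^ 2 := by
            rw [Finset.sum_pair hne, hm]
            simp [hkk']
        _ ≤ ∑ j, ‖U (τ k) j‖ ^ 2 :=
            Finset.sum_le_sum_of_subset_of_nonneg (Finset.subset_univ _)
              fun j _ _ => sq_nonneg _
    nlinarith [hmhalf k, hmhalf k']
  have hbij : Function.Bijective τ := (Finite.injective_iff_bijective).mp hinj
  have hmne : ∀ k, m k ≠ 0 := by
    intro k h; have := hmbig k; nlinarith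
  refine ⟨Equiv.ofBijective τ hbij, fun k => U (τ k) k / (m k : ℂ), ?_, ?_⟩
  · intro k
    rw [norm_div, Complex.norm_real, Real.norm_eq_abs, abs_of_nonneg (hm0 k)]
    exact div_self (hmne k)
  · set d : Fin n → ℂ := fun k => U (τ k) k / (m k : ℂ) with hd
    have hmC : ∀ k, (m k : ℂ) ≠ 0 := fun k => by exact_mod_cast hmne k
    -- entrywise description of the product matrix
    have hent : ∀ i k, ((Matrix.of fun i j => if i = (Equiv.ofBijective τ hbij) j then (1 : ℂ) else 0)
        * Matrix.diagonal d) i k = if i = τ k then d k else 0 := by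
      intro i k
      rw [Matrix.mul_diagonal]
      simp only [Matrix.of_apply, Equiv.ofBijective_apply]
      split_ifs <;> simp
    -- the diagonal difference has modulus 1 - m k
    have habs : ∀ k, ‖U (τ k) k - d k‖ = 1 - m k := by
      intro k
      have hz : U (τ k) k - d k = U (τ k) k * ((m k - 1 : ℝ) : ℂ) / (m k : ℂ) := by
        rw [hd, eq_div_iff (hmC k), sub_mul, div_mul_cancel₀ _ (hmC k)]
        push_cast
        ring
      rw [hz, norm_div, norm_mul, Complex.norm_real, Complex.norm_real, Real.norm_eq_abs, Real.norm_eq_abs,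
        abs_of_nonneg (hm0 k), abs_of_nonpos (by linarith [hm1 k] : m k - 1 ≤ 0)]
      rw [show ‖U (τ k) k‖ = m k from rfl, mul_comm, mul_div_assoc,
        div_self (hmne k), mul_one]
      ring
    -- Frobenius sum over each column
    have hcolsum : ∀ k, (∑ i, ‖(U - (Matrix.of fun i j => if i = (Equiv.ofBijective τ hbij) j then (1 : ℂ) else 0)
          * Matrix.diagonal d) i k‖ ^ 2) = 2 * (1 - m k) := by
      intro k
      have hM : ∀ i, (U - (Matrix.of fun i j => if i = (Equiv.ofBijective τ hbij) j then (1 : ℂ) else 0)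
          * Matrix.diagonal d) i k = U i k - (if i = τ k then d k else 0) := by
        intro i; rw [Matrix.sub_apply, hent]
      have step1 : (∑ i, ‖(U - (Matrix.of fun i j => if i = (Equiv.ofBijective τ hbij) j then (1 : ℂ) else 0)
            * Matrix.diagonal d) i k‖ ^ 2)
          = ∑ i, ‖U i k - (if i = τ k then d k else 0)‖ ^ 2 :=
        Finset.sum_congr rfl fun i _ => by rw [hM]
      rw [step1]
      rw [← Finset.add_sum_erase _ (fun i => ‖U i k - (if i = τ k then d k else 0)‖ ^ 2)
        (Finset.mem_univ (τ k))]
      have h1 : ‖U (τ k) k - (if τ k = τ k then d k else 0)‖ ^ 2 = (1 - m k) ^ 2 := by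
        rw [if_pos rfl, habs k]
      have h2 : (∑ i ∈ Finset.univ.erase (τ k),
          ‖U i k - (if i = τ k then d k else 0)‖ ^ 2) = 1 - m k ^ 2 := by
        have heq : (∑ i ∈ Finset.univ.erase (τ k),
            ‖U i k - (if i = τ k then d k else 0)‖ ^ 2)
            = ∑ i ∈ Finset.univ.erase (τ k), ‖U i k‖ ^ 2 :=
          Finset.sum_congr rfl fun i hi => by
            rw [if_neg (Finset.ne_of_mem_erase hi), sub_zero]
        have hsp : m k ^ 2 + ∑ i ∈ Finset.univ.erase (τ k), ‖U i k‖ ^ 2 = 1 := by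
          have := Finset.add_sum_erase Finset.univ (fun i => ‖U i k‖ ^ 2)
            (Finset.mem_univ (τ k))
          rw [hcol k] at this
          exact this
        rw [heq]; linarith
      rw [h1, h2]; ring
    rw [Finset.sum_comm]
    have htot : (∑ k, ∑ i, ‖(U - (Matrix.of fun i j => if i = (Equiv.ofBijective τ hbij) j then (1 : ℂ) else 0)
          * Matrix.diagonal d) i k‖ ^ 2) ≤ 3 * n * δ := by
      have heq : (∑ k, ∑ i, ‖(U - (Matrix.of fun i j => if i = (Equiv.ofBijective τ hbij) j then (1 : ℂ) else 0)
            * Matrix.diagonal d) i k‖ ^ 2) = ∑ k, 2 * (1 - m k) :=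
        Finset.sum_congr rfl fun k _ => hcolsum k
      have hval : ∑ k, 2 * (1 - m k) = 2 * ((n : ℝ) - ∑ k, m k) := by
        rw [← Finset.mul_sum, Finset.sum_sub_distrib]
        simp [Finset.card_univ]
      have hnd : 0 ≤ (n : ℝ) * δ := by positivity
      rw [heq, hval]; nlinarith [hsum_m]
    exact Real.sqrt_le_sqrt htot
end

section
/- Let n ≥ 1 and m > 0 be real. Let A₁, A₂ be n×n real matrices with nonnegative entries and Frobenius norms ‖A₁‖_F = ‖A₂‖_F = √(2m), regarded as complex matrices. Let U be an n×n complex unitary matrix, let P be the permutation matrix of a permutation of {1,…,n}, let D be a diagonal matrix whose diagonal entries all have modulus 1, and let t ≥ 0 satisfy ‖U − P·D‖_F ≤ t. Then |Tr(A₁·Uᵀ·A₂·U)| ≤ Tr(A₁·Pᵀ·A₂·P) + 4mt + 2mt². -/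
open Matrix

namespace TraceAux

variable {n : ℕ}

/-- Cauchy–Schwarz with square roots. -/
lemma cs_sqrt {ι : Type*} (s : Finset ι) (f g : ι → ℝ) :
    ∑ i ∈ s, f i * g i ≤
      Real.sqrt (∑ i ∈ s, f i ^ 2) * Real.sqrt (∑ i ∈ s, g i ^ 2) := by
  have h := Finset.sum_mul_sq_le_sq_mul_sq s f g
  calc ∑ i ∈ s, f i * g i ≤ |∑ i ∈ s, f i * g i| := le_abs_self _
    _ = Real.sqrt ((∑ i ∈ s, f i * g i) ^ 2) := (Real.sqrt_sq_eq_abs _).symm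
    _ ≤ Real.sqrt ((∑ i ∈ s, f i ^ 2) * ∑ i ∈ s, g i ^ 2) := Real.sqrt_le_sqrt h
    _ = _ := Real.sqrt_mul (Finset.sum_nonneg fun _ _ => sq_nonneg _) _

/-- Frobenius norm. -/
noncomputable def N (X : Matrix (Fin n) (Fin n) ℂ) : ℝ :=
  Real.sqrt (∑ i, ∑ k, ‖X i k‖ ^ 2)

lemma N_nonneg (X : Matrix (Fin n) (Fin n) ℂ) : 0 ≤ N X := Real.sqrt_nonneg _

lemma sumsq_nonneg (X : Matrix (Fin n) (Fin n) ℂ) :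
    0 ≤ ∑ i, ∑ k, ‖X i k‖ ^ 2 :=
  Finset.sum_nonneg fun _ _ => Finset.sum_nonneg fun _ _ => sq_nonneg _

lemma N_sq (X : Matrix (Fin n) (Fin n) ℂ) :
    N X ^ 2 = ∑ i, ∑ k, ‖X i k‖ ^ 2 := Real.sq_sqrt (sumsq_nonneg X)

lemma N_transpose (X : Matrix (Fin n) (Fin n) ℂ) : N Xᵀ = N X := by
  unfold N
  rw [Finset.sum_comm]
  simp only [Matrix.transpose_apply]

lemma abs_trace_mul_le (X Y : Matrix (Fin n) (Fin n) ℂ) :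
    ‖(X * Y).trace‖ ≤ N X * N Y := by
  have h1 : ‖(X * Y).trace‖ ≤
      ∑ p : Fin n × Fin n, ‖X p.1 p.2‖ * ‖Y p.2 p.1‖ := by
    rw [Matrix.trace]
    calc ‖∑ i, (X * Y).diag i‖
        ≤ ∑ i, ‖(X * Y).diag i‖ := norm_sum_le _ _
      _ ≤ ∑ i, ∑ j, ‖X i j‖ * ‖Y j i‖ := by
          refine Finset.sum_le_sum fun i _ => ?_
          rw [Matrix.diag, Matrix.mul_apply]
          refine le_trans (norm_sum_le _ _) (le_of_eq ?_)
          simp [_root_.map_mul]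
      _ = _ := by
          rw [← Finset.univ_product_univ, Finset.sum_product]
  refine h1.trans ?_
  have h2 := cs_sqrt Finset.univ (fun p : Fin n × Fin n => ‖X p.1 p.2‖)
    (fun p : Fin n × Fin n => ‖Y p.2 p.1‖)
  refine h2.trans (le_of_eq ?_)
  congr 1
  · unfold N
    rw [← Finset.univ_product_univ, Finset.sum_product]
  · unfold N
    rw [← Finset.univ_product_univ, Finset.sum_product]
    rw [Finset.sum_comm]

lemma N_mul_le (X Y : Matrix (Fin n) (Fin n) ℂ) : N (X * Y) ≤ N X * N Y := by
  have key : ∀ i k, ‖(X * Y) i k‖ ^ 2 ≤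
      (∑ j, ‖X i j‖ ^ 2) * (∑ j, ‖Y j k‖ ^ 2) := by
    intro i k
    have h1 : ‖(X * Y) i k‖ ≤
        ∑ j, ‖X i j‖ * ‖Y j k‖ := by
      rw [Matrix.mul_apply]
      refine le_trans (norm_sum_le _ _) (le_of_eq ?_)
      simp [_root_.map_mul]
    calc ‖(X * Y) i k‖ ^ 2
        ≤ (∑ j, ‖X i j‖ * ‖Y j k‖) ^ 2 := by
          exact pow_le_pow_left₀ (norm_nonneg _) h1 2
      _ ≤ _ := Finset.sum_mul_sq_le_sq_mul_sq _ _ _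
  have h2 : N (X * Y) ^ 2 ≤ (N X * N Y) ^ 2 := by
    rw [N_sq, mul_pow, N_sq, N_sq]
    calc ∑ i, ∑ k, ‖(X * Y) i k‖ ^ 2
        ≤ ∑ i, ∑ k, (∑ j, ‖X i j‖ ^ 2) * (∑ j, ‖Y j k‖ ^ 2) :=
          Finset.sum_le_sum fun i _ => Finset.sum_le_sum fun k _ => key i k
      _ = (∑ i, ∑ j, ‖X i j‖ ^ 2) * (∑ j, ∑ k, ‖Y j k‖ ^ 2) := by
          rw [← Finset.sum_mul_sum]
          congr 1
          exact Finset.sum_comm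
  calc N (X * Y) = Real.sqrt (N (X * Y) ^ 2) := (Real.sqrt_sq (N_nonneg _)).symm
    _ ≤ Real.sqrt ((N X * N Y) ^ 2) := Real.sqrt_le_sqrt h2
    _ = N X * N Y := Real.sqrt_sq (mul_nonneg (N_nonneg _) (N_nonneg _))


section pm
variable {R : Type*} [CommRing R]

/-- Permutation matrix with phases `e`. -/
def pm (σ : Equiv.Perm (Fin n)) (e : Fin n → R) : Matrix (Fin n) (Fin n) R :=
  Matrix.of fun a j => if a = σ j then e j else 0

lemma mul_pm (σ : Equiv.Perm (Fin n)) (e : Fin n → R) (X : Matrix (Fin n) (Fin n) R)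
    (i k : Fin n) : (X * pm σ e) i k = X i (σ k) * e k := by
  rw [Matrix.mul_apply]
  rw [Finset.sum_eq_single (σ k)]
  · simp [pm]
  · intro b _ hb; simp [pm, hb]
  · simp

lemma mul_pmT (σ : Equiv.Perm (Fin n)) (e : Fin n → R) (X : Matrix (Fin n) (Fin n) R)
    (i j : Fin n) : (X * (pm σ e)ᵀ) i j = X i (σ.symm j) * e (σ.symm j) := by
  rw [Matrix.mul_apply]
  rw [Finset.sum_eq_single (σ.symm j)]
  · simp [pm]
  · intro b _ hb
    simp only [Matrix.transpose_apply, pm, Matrix.of_apply]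
    rw [if_neg, mul_zero]
    intro h
    exact hb (by rw [h, Equiv.symm_apply_apply])
  · simp

lemma pm_one_eq (σ : Equiv.Perm (Fin n)) :
    (Matrix.of fun i j => if i = σ j then (1 : ℝ) else 0) = pm σ (fun _ => (1 : ℝ)) := by
  ext i j; simp [pm]

lemma pm_d_eq (σ : Equiv.Perm (Fin n)) (d : Fin n → ℂ) :
    (Matrix.of fun i j => if i = σ j then (1 : ℝ) else 0).map (Complex.ofReal) *
      Matrix.diagonal d = pm σ d := by
  ext i j
  simp [pm, Matrix.mul_diagonal, Matrix.map_apply, apply_ite Complex.ofReal, ite_mul]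

lemma trace_pm_conj (σ : Equiv.Perm (Fin n)) (e : Fin n → R)
    (A₁ A₂ : Matrix (Fin n) (Fin n) R) :
    (A₁ * (pm σ e)ᵀ * A₂ * pm σ e).trace
      = ∑ i, ∑ j, A₁ i (σ.symm j) * e (σ.symm j) * A₂ j (σ i) * e i := by
  have h1 : ∀ i, (A₁ * (pm σ e)ᵀ * A₂ * pm σ e) i i
      = (A₁ * (pm σ e)ᵀ * A₂) i (σ i) * e i := fun i => mul_pm σ e _ i i
  have h2 : ∀ i k, (A₁ * (pm σ e)ᵀ * A₂) i k
      = ∑ j, A₁ i (σ.symm j) * e (σ.symm j) * A₂ j k := by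
    intro i k
    rw [Matrix.mul_apply]
    exact Finset.sum_congr rfl fun j _ => by rw [mul_pmT]
  rw [Matrix.trace]
  simp only [Matrix.diag, h1, h2, Finset.sum_mul]

end pm

lemma N_mul_pm (σ : Equiv.Perm (Fin n)) (d : Fin n → ℂ) (hd : ∀ i, ‖d i‖ = 1)
    (X : Matrix (Fin n) (Fin n) ℂ) : N (X * pm σ d) = N X := by
  unfold N
  congr 1
  calc ∑ i, ∑ k, ‖(X * pm σ d) i k‖ ^ 2
      = ∑ i, ∑ k, ‖X i (σ k)‖ ^ 2 := by
        simp_rw [mul_pm, norm_mul, hd, mul_one]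
    _ = ∑ i, ∑ k, ‖X i k‖ ^ 2 :=
        Finset.sum_congr rfl fun i _ => Equiv.sum_comp σ (fun k => ‖X i k‖ ^ 2)

lemma N_mul_pmT (σ : Equiv.Perm (Fin n)) (d : Fin n → ℂ) (hd : ∀ i, ‖d i‖ = 1)
    (X : Matrix (Fin n) (Fin n) ℂ) : N (X * (pm σ d)ᵀ) = N X := by
  unfold N
  congr 1
  calc ∑ i, ∑ k, ‖(X * (pm σ d)ᵀ) i k‖ ^ 2
      = ∑ i, ∑ k, ‖X i (σ.symm k)‖ ^ 2 := by
        simp_rw [mul_pmT, norm_mul, hd, mul_one]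
    _ = ∑ i, ∑ k, ‖X i k‖ ^ 2 :=
        Finset.sum_congr rfl fun i _ => Equiv.sum_comp σ.symm (fun k => ‖X i k‖ ^ 2)

end TraceAux


/-- If the unitary `U` is Frobenius-close to a permutation-times-phase
matrix `P·D`, then the trace quantity `|Tr(A₁ Uᵀ A₂ U)|` is controlled by the
permutation version `Tr(A₁ Pᵀ A₂ P)` up to error terms `4mt + 2mt²`. -/
theorem trace_perturbation_bound
    {n : ℕ} (hn : 1 ≤ n) (m : ℝ) (hm : 0 < m)
    (A₁ A₂ : Matrix (Fin n) (Fin n) ℝ)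
    (hA₁ : ∀ i j, 0 ≤ A₁ i j) (hA₂ : ∀ i j, 0 ≤ A₂ i j)
    (hF₁ : Real.sqrt (∑ i, ∑ k, (A₁ i k) ^ 2) = Real.sqrt (2 * m))
    (hF₂ : Real.sqrt (∑ i, ∑ k, (A₂ i k) ^ 2) = Real.sqrt (2 * m))
    (U : Matrix (Fin n) (Fin n) ℂ)
    (hU : U ∈ Matrix.unitaryGroup (Fin n) ℂ)
    (σ : Equiv.Perm (Fin n)) (d : Fin n → ℂ) (hd : ∀ i, ‖d i‖ = 1)
    (t : ℝ) (ht : 0 ≤ t)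
    (hdist : Real.sqrt (∑ i, ∑ k, ‖
        ((U - ((Matrix.of fun i j => if i = σ j then (1 : ℝ) else 0).map (Complex.ofReal) *
          Matrix.diagonal d)) i k)‖ ^ 2) ≤ t) :
    ‖(A₁.map Complex.ofReal * Uᵀ * A₂.map Complex.ofReal * U).trace‖
      ≤ (A₁ * (Matrix.of fun i j => if i = σ j then (1 : ℝ) else 0)ᵀ * A₂ *
          (Matrix.of fun i j => if i = σ j then (1 : ℝ) else 0)).trace
        + 4 * m * t + 2 * m * t ^ 2 := by
  classical
  open TraceAux in
  rw [TraceAux.pm_d_eq] at hdist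
  rw [TraceAux.pm_one_eq]
  set A₁c := A₁.map Complex.ofReal with hA1c
  set A₂c := A₂.map Complex.ofReal with hA2c
  set E : Matrix (Fin n) (Fin n) ℂ := U - TraceAux.pm σ d with hEdef
  have hNE : TraceAux.N E ≤ t := hdist
  have hNE0 : 0 ≤ TraceAux.N E := TraceAux.N_nonneg _
  have h2m : (0:ℝ) ≤ 2 * m := by linarith
  have hs2 : Real.sqrt (2 * m) * Real.sqrt (2 * m) = 2 * m := Real.mul_self_sqrt h2m
  have hNA1 : TraceAux.N A₁c = Real.sqrt (2 * m) := by
    rw [← hF₁]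
    unfold TraceAux.N
    congr 1
    refine Finset.sum_congr rfl fun i _ => Finset.sum_congr rfl fun k _ => ?_
    simp [hA1c, Matrix.map_apply, Complex.norm_real, sq_abs]
  have hNA2 : TraceAux.N A₂c = Real.sqrt (2 * m) := by
    rw [← hF₂]
    unfold TraceAux.N
    congr 1
    refine Finset.sum_congr rfl fun i _ => Finset.sum_congr rfl fun k _ => ?_
    simp [hA2c, Matrix.map_apply, Complex.norm_real, sq_abs]
  have hUME : U = TraceAux.pm σ d + E := by rw [hEdef]; abel
  have hsplit : A₁c * Uᵀ * A₂c * U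
      = A₁c * (TraceAux.pm σ d)ᵀ * A₂c * TraceAux.pm σ d
        + A₁c * (TraceAux.pm σ d)ᵀ * A₂c * E
        + A₁c * Eᵀ * A₂c * TraceAux.pm σ d
        + A₁c * Eᵀ * A₂c * E := by
    rw [hUME, Matrix.transpose_add]
    noncomm_ring
  -- bound the main term
  have b0 : ‖(A₁c * (TraceAux.pm σ d)ᵀ * A₂c * TraceAux.pm σ d).trace‖
      ≤ (A₁ * (TraceAux.pm σ (fun _ => (1:ℝ)))ᵀ * A₂ * TraceAux.pm σ (fun _ => (1:ℝ))).trace := by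
    rw [TraceAux.trace_pm_conj, TraceAux.trace_pm_conj]
    calc ‖∑ i, ∑ j, A₁c i (σ.symm j) * d (σ.symm j) * A₂c j (σ i) * d i‖
        ≤ ∑ i, ‖∑ j, A₁c i (σ.symm j) * d (σ.symm j) * A₂c j (σ i) * d i‖ :=
          norm_sum_le _ _
      _ ≤ ∑ i, ∑ j, ‖A₁c i (σ.symm j) * d (σ.symm j) * A₂c j (σ i) * d i‖ :=
          Finset.sum_le_sum fun i _ => norm_sum_le _ _
      _ = ∑ i, ∑ j, A₁ i (σ.symm j) * (fun _ => (1:ℝ)) (σ.symm j) * A₂ j (σ i)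
            * (fun _ => (1:ℝ)) i := by
          refine Finset.sum_congr rfl fun i _ => Finset.sum_congr rfl fun j _ => ?_
          simp [hA1c, hA2c, _root_.map_mul, Matrix.map_apply, Complex.norm_real, hd,
            abs_of_nonneg (hA₁ _ _), abs_of_nonneg (hA₂ _ _)]
  -- cross term 1
  have b1 : ‖(A₁c * (TraceAux.pm σ d)ᵀ * A₂c * E).trace‖
      ≤ 2 * m * TraceAux.N E := by
    calc ‖(A₁c * (TraceAux.pm σ d)ᵀ * A₂c * E).trace‖
        ≤ TraceAux.N (A₁c * (TraceAux.pm σ d)ᵀ * A₂c) * TraceAux.N E :=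
          TraceAux.abs_trace_mul_le _ _
      _ ≤ (TraceAux.N (A₁c * (TraceAux.pm σ d)ᵀ) * TraceAux.N A₂c) * TraceAux.N E := by
          exact mul_le_mul_of_nonneg_right (TraceAux.N_mul_le _ _) hNE0
      _ = 2 * m * TraceAux.N E := by
          rw [TraceAux.N_mul_pmT σ d hd, hNA1, hNA2, hs2]
  -- cross term 2
  have e2 : (A₁c * Eᵀ * A₂c * TraceAux.pm σ d).trace
      = ((A₂c * TraceAux.pm σ d * A₁c) * Eᵀ).trace := by
    rw [Matrix.mul_assoc (A₁c * Eᵀ) A₂c (TraceAux.pm σ d), Matrix.trace_mul_comm,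
      ← Matrix.mul_assoc]
  have b2 : ‖(A₁c * Eᵀ * A₂c * TraceAux.pm σ d).trace‖
      ≤ 2 * m * TraceAux.N E := by
    rw [e2]
    calc ‖((A₂c * TraceAux.pm σ d * A₁c) * Eᵀ).trace‖
        ≤ TraceAux.N (A₂c * TraceAux.pm σ d * A₁c) * TraceAux.N Eᵀ :=
          TraceAux.abs_trace_mul_le _ _
      _ ≤ (TraceAux.N (A₂c * TraceAux.pm σ d) * TraceAux.N A₁c) * TraceAux.N Eᵀ := by
          exact mul_le_mul_of_nonneg_right (TraceAux.N_mul_le _ _) (TraceAux.N_nonneg _)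
      _ = 2 * m * TraceAux.N E := by
          rw [TraceAux.N_mul_pm σ d hd, hNA1, hNA2, hs2, TraceAux.N_transpose]
  -- quadratic term
  have e3 : (A₁c * Eᵀ * A₂c * E).trace = ((A₂c * E * A₁c) * Eᵀ).trace := by
    rw [Matrix.mul_assoc (A₁c * Eᵀ) A₂c E, Matrix.trace_mul_comm, ← Matrix.mul_assoc]
  have b3 : ‖(A₁c * Eᵀ * A₂c * E).trace‖
      ≤ 2 * m * (TraceAux.N E * TraceAux.N E) := by
    rw [e3]
    calc ‖((A₂c * E * A₁c) * Eᵀ).trace‖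
        ≤ TraceAux.N (A₂c * E * A₁c) * TraceAux.N Eᵀ := TraceAux.abs_trace_mul_le _ _
      _ ≤ (TraceAux.N (A₂c * E) * TraceAux.N A₁c) * TraceAux.N Eᵀ :=
          mul_le_mul_of_nonneg_right (TraceAux.N_mul_le _ _) (TraceAux.N_nonneg _)
      _ ≤ ((TraceAux.N A₂c * TraceAux.N E) * TraceAux.N A₁c) * TraceAux.N Eᵀ := by
          refine mul_le_mul_of_nonneg_right (mul_le_mul_of_nonneg_right
            (TraceAux.N_mul_le _ _) ?_) (TraceAux.N_nonneg _)
          rw [hNA1]; positivity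
      _ = 2 * m * (TraceAux.N E * TraceAux.N E) := by
          rw [hNA1, hNA2, TraceAux.N_transpose]
          linear_combination (TraceAux.N E * TraceAux.N E) * hs2
  have habs : ‖(A₁c * Uᵀ * A₂c * U).trace‖
      ≤ ‖(A₁c * (TraceAux.pm σ d)ᵀ * A₂c * TraceAux.pm σ d).trace‖
        + ‖(A₁c * (TraceAux.pm σ d)ᵀ * A₂c * E).trace‖
        + ‖(A₁c * Eᵀ * A₂c * TraceAux.pm σ d).trace‖
        + ‖(A₁c * Eᵀ * A₂c * E).trace‖ := by
    rw [hsplit, Matrix.trace_add, Matrix.trace_add, Matrix.trace_add]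
    calc ‖_ + _ + _ + _‖
        ≤ ‖_ + _ + _‖ + ‖_‖ := norm_add_le _ _
      _ ≤ (‖_ + _‖ + ‖_‖) + ‖_‖ := by
          exact add_le_add_left (norm_add_le _ _) _
      _ ≤ ((‖_‖ + ‖_‖) + ‖_‖) + ‖_‖ := by
          exact add_le_add_left (add_le_add_left (norm_add_le _ _) _) _
  have hEt : 2 * m * TraceAux.N E ≤ 2 * m * t := by nlinarith
  have hEt2 : 2 * m * (TraceAux.N E * TraceAux.N E) ≤ 2 * m * t ^ 2 := by nlinarith
  linarith [habs, b0, b1, b2, b3, hEt, hEt2]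
end

section
/- Let d ≥ 1, let ρ and σ be d×d density matrices, let S be a nonempty finite set of d×d complex unitary matrices, and let ε ≥ 0 be such that F(V·ρ·Vᴴ, U·σ·Uᴴ) ≤ ε for all U, V ∈ S. Define the twirling channel ℰ(X) = (1/|S|)·∑_{U∈S} U·X·Uᴴ. Then F(ℰ(ρ), ℰ(σ)) ≤ ε·|S|. -/
open Matrix
open scoped ComplexOrder Classical

/-- The positive semidefinite square root of a matrix (junk value `0` when the
matrix is not positive semidefinite). -/
noncomputable def msqrt {d : Type*} [Fintype d] [DecidableEq d]
    (M : Matrix d d ℂ) : Matrix d d ℂ :=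
  if h : M.PosSemidef then
    (h.1.eigenvectorUnitary : Matrix d d ℂ) * diagonal ((↑) ∘ (√·) ∘ h.1.eigenvalues) *
      (star h.1.eigenvectorUnitary : Matrix d d ℂ)
  else 0

/-- The square-root fidelity `F(ρ,σ) = Tr √(√ρ σ √ρ)` of two positive
semidefinite matrices. -/
noncomputable def fid {d : Type*} [Fintype d] [DecidableEq d]
    (ρ σ : Matrix d d ℂ) : ℝ :=
  ((msqrt (msqrt ρ * σ * msqrt ρ)).trace).re

namespace FidAux

variable {d : Type*} [Fintype d] [DecidableEq d]

open scoped MatrixOrder in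
lemma msqrt_eq {M : Matrix d d ℂ} (h : M.PosSemidef) : msqrt M = CFC.sqrt M := by
  rw [msqrt, dif_pos h, CFC.sqrt_eq_cfc, cfc_nnreal_eq_real _ M h.nonneg, h.1.cfc_eq,
    IsHermitian.cfc, Unitary.conjStarAlgAut_apply]
  simp [Function.comp_def, Real.coe_sqrt, max_eq_left, h.eigenvalues_nonneg]

open scoped MatrixOrder in
lemma msqrt_psd (M : Matrix d d ℂ) : (msqrt M).PosSemidef := by
  by_cases h : M.PosSemidef
  · rw [msqrt_eq h]; exact (CFC.sqrt_nonneg M).posSemidef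
  · rw [msqrt, dif_neg h]; exact .zero

open scoped MatrixOrder in
lemma msqrt_mul_self {M : Matrix d d ℂ} (h : M.PosSemidef) : msqrt M * msqrt M = M := by
  rw [msqrt_eq h]; exact CFC.sqrt_mul_sqrt_self M h.nonneg

lemma msqrt_herm (M : Matrix d d ℂ) : (msqrt M)ᴴ = msqrt M := (msqrt_psd M).1

open scoped MatrixOrder in
lemma msqrt_zero : msqrt (0 : Matrix d d ℂ) = 0 := by
  rw [msqrt_eq Matrix.PosSemidef.zero]
  exact CFC.sqrt_zero

lemma trace_re_nonneg {M : Matrix d d ℂ} (h : M.PosSemidef) : 0 ≤ M.trace.re := by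
  rw [Matrix.trace]
  have : ∀ i, 0 ≤ (M i i).re := by
    intro i
    have e : (star (Pi.single i 1) ⬝ᵥ M *ᵥ Pi.single i 1) = M i i := by
      simp [dotProduct, Matrix.mulVec, Pi.single_apply, apply_ite, mul_comm]
    have := h.re_dotProduct_nonneg (Pi.single i 1)
    rwa [e] at this
  simpa [Matrix.diag, Complex.re_sum] using Finset.sum_nonneg fun i _ => this i

lemma trace_re_mono {A B : Matrix d d ℂ} (h : (B - A).PosSemidef) :
    A.trace.re ≤ B.trace.re := by
  have := trace_re_nonneg h
  rw [Matrix.trace_sub, Complex.sub_re] at this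
  linarith


/-- Apply a real function to a spectral decomposition. -/
noncomputable def dm (U : Matrix d d ℂ) (e : d → ℝ) (f : ℝ → ℝ) : Matrix d d ℂ :=
  U * Matrix.diagonal (fun i => ((f (e i) : ℝ) : ℂ)) * Uᴴ

variable {U : Matrix d d ℂ} {e : d → ℝ}

lemma dm_mul (hU2 : Uᴴ * U = 1) (f g : ℝ → ℝ) :
    dm U e f * dm U e g = dm U e (fun t => f t * g t) := by
  rw [dm, dm, dm]
  simp only [Matrix.mul_assoc]
  rw [← Matrix.mul_assoc Uᴴ U, hU2, Matrix.one_mul,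
    ← Matrix.mul_assoc (Matrix.diagonal _) (Matrix.diagonal _), Matrix.diagonal_mul_diagonal]
  push_cast
  rfl

lemma dm_cong (f g : ℝ → ℝ) (h : ∀ i, f (e i) = g (e i)) : dm U e f = dm U e g := by
  rw [dm, dm]
  have e1 : (fun i => ((f (e i) : ℝ) : ℂ)) = (fun i => ((g (e i) : ℝ) : ℂ)) :=
    funext fun i => by rw [h i]
  rw [e1]

lemma dm_one (hU1 : U * Uᴴ = 1) : dm U e (fun _ => 1) = 1 := by
  rw [dm]
  simp [hU1]

lemma dm_sub (f g : ℝ → ℝ) : dm U e f - dm U e g = dm U e (fun t => f t - g t) := by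
  rw [dm, dm, dm]
  simp only [← Matrix.sub_mul, ← Matrix.mul_sub, Matrix.diagonal_sub]
  push_cast
  rfl

lemma dm_psd (f : ℝ → ℝ) (hf : ∀ i, 0 ≤ f (e i)) : (dm U e f).PosSemidef :=
  (Matrix.posSemidef_diagonal_iff.mpr
    (fun i => Complex.zero_le_real.mpr (hf i))).mul_mul_conjTranspose_same U

lemma pinv_package {S : Matrix d d ℂ} (hS : S.PosSemidef) :
    ∃ B : Matrix d d ℂ, B.PosSemidef ∧ B * S = msqrt S ∧
      (1 - B * S * B).PosSemidef ∧ (B * S * B) * S = S := by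
  classical
  have hU1 : (hS.1.eigenvectorUnitary : Matrix d d ℂ) *
      (hS.1.eigenvectorUnitary : Matrix d d ℂ)ᴴ = 1 := by
    rw [← Matrix.star_eq_conjTranspose]
    exact Matrix.mem_unitaryGroup_iff.mp hS.1.eigenvectorUnitary.2
  have hU2 : (hS.1.eigenvectorUnitary : Matrix d d ℂ)ᴴ *
      (hS.1.eigenvectorUnitary : Matrix d d ℂ) = 1 := by
    rw [← Matrix.star_eq_conjTranspose]
    exact Matrix.mem_unitaryGroup_iff'.mp hS.1.eigenvectorUnitary.2
  set V : Matrix d d ℂ := (hS.1.eigenvectorUnitary : Matrix d d ℂ)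
  set ev : d → ℝ := hS.1.eigenvalues
  have hspec : dm V ev id = S := by
    rw [dm]
    have := hS.1.spectral_theorem
    rw [Unitary.conjStarAlgAut_apply, Matrix.star_eq_conjTranspose] at this
    exact this.symm
  have hsqrt : dm V ev Real.sqrt = msqrt S := by
    rw [msqrt, dif_pos hS, dm, Matrix.star_eq_conjTranspose]
    rfl
  have heig0 : ∀ i, 0 ≤ ev i := hS.eigenvalues_nonneg
  set g : ℝ → ℝ := fun t => if t = 0 then 0 else (Real.sqrt t)⁻¹ with hg
  have key : ∀ i, ¬ ev i = 0 → Real.sqrt (ev i) ≠ 0 := fun i hi =>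
    ne_of_gt (Real.sqrt_pos.mpr (lt_of_le_of_ne (heig0 i) (Ne.symm hi)))
  refine ⟨dm V ev g, dm_psd g fun i => ?_, ?_, ?_, ?_⟩
  · rw [hg]
    dsimp only
    split
    · exact le_refl 0
    · exact inv_nonneg.mpr (Real.sqrt_nonneg _)
  · rw [← hsqrt, ← hspec, dm_mul hU2]
    refine dm_cong _ _ fun i => ?_
    by_cases hi : ev i = 0
    · simp [hg, hi]
    · simp only [hg, if_neg hi, id_eq]
      have hs : Real.sqrt (ev i) * Real.sqrt (ev i) = ev i := Real.mul_self_sqrt (heig0 i)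
      have h2 : (Real.sqrt (ev i))⁻¹ * (Real.sqrt (ev i) * Real.sqrt (ev i)) = Real.sqrt (ev i) := by
        field_simp [key i hi]
      rwa [hs] at h2
  · rw [← hspec, dm_mul hU2, dm_mul hU2, ← dm_one (e := ev) hU1, dm_sub]
    refine dm_psd _ fun i => ?_
    by_cases hi : ev i = 0
    · simp [hg, hi]
    · simp only [hg, if_neg hi, id_eq]
      have hs : Real.sqrt (ev i) * Real.sqrt (ev i) = ev i := Real.mul_self_sqrt (heig0 i)
      have h2 : (Real.sqrt (ev i))⁻¹ * (Real.sqrt (ev i) * Real.sqrt (ev i)) *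
          (Real.sqrt (ev i))⁻¹ = 1 := by
        field_simp [key i hi]
      rw [hs] at h2
      rw [h2]
      norm_num
  · rw [← hspec, dm_mul hU2, dm_mul hU2, dm_mul hU2]
    refine dm_cong _ _ fun i => ?_
    by_cases hi : ev i = 0
    · simp [hg, hi]
    · simp only [hg, if_neg hi, id_eq]
      have hs : Real.sqrt (ev i) * Real.sqrt (ev i) = ev i := Real.mul_self_sqrt (heig0 i)
      have h4 : (Real.sqrt (ev i))⁻¹ * (Real.sqrt (ev i) * Real.sqrt (ev i)) *
          (Real.sqrt (ev i))⁻¹ * (Real.sqrt (ev i) * Real.sqrt (ev i))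
          = Real.sqrt (ev i) * Real.sqrt (ev i) := by
        field_simp [key i hi]
      rwa [hs] at h4
lemma trace_cs (X Y : Matrix d d ℂ) :
    ‖(Xᴴ * Y).trace‖ ≤ Real.sqrt ((Xᴴ*X).trace.re) * Real.sqrt ((Yᴴ*Y).trace.re) := by
  classical
  let x : EuclideanSpace ℂ (d × d) := WithLp.toLp 2 (fun p : d × d => X p.1 p.2)
  let y : EuclideanSpace ℂ (d × d) := WithLp.toLp 2 (fun p : d × d => Y p.1 p.2)
  have htr : ∀ (A B : Matrix d d ℂ), (Aᴴ * B).trace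
      = ∑ p : d × d, (starRingEnd ℂ) (A p.1 p.2) * B p.1 p.2 := by
    intro A B
    rw [Fintype.sum_prod_type, Finset.sum_comm]
    simp [Matrix.trace, Matrix.diag, Matrix.mul_apply, Matrix.conjTranspose_apply]
  have h1 : (Xᴴ * Y).trace = (inner ℂ x y : ℂ) := by
    rw [htr, PiLp.inner_apply]
    exact Finset.sum_congr rfl fun p _ => by simp [x, y, mul_comm]
  have hn : ∀ (A : Matrix d d ℂ) (a : EuclideanSpace ℂ (d × d)),
      (∀ p : d × d, a p = A p.1 p.2) → ‖a‖ = Real.sqrt ((Aᴴ*A).trace.re) := by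
    intro A a ha
    rw [EuclideanSpace.norm_eq, htr]
    congr 1
    rw [Complex.re_sum]
    refine Finset.sum_congr rfl fun p _ => ?_
    rw [ha p, Complex.conj_mul']
    norm_cast
  calc ‖(Xᴴ * Y).trace‖ = ‖(inner ℂ x y : ℂ)‖ := by rw [h1]
    _ ≤ ‖x‖ * ‖y‖ := norm_inner_le_norm x y
    _ = _ := by rw [hn X x fun p => rfl, hn Y y fun p => rfl]

lemma key_step' {B Q R : Matrix d d ℂ} (hB : Bᴴ = B) (hQh : Qᴴ = Q)
    (hQ2 : Q * Q = R) (hRtr : 0 ≤ R.trace.re)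
    (h1 : (1 - B * (R * R) * B).PosSemidef) :
    ((B * (R * R)).trace).re ≤ R.trace.re := by
  obtain ⟨X, hX⟩ : ∃ X : Matrix d d ℂ, X = Q * Q * B * Q := ⟨_, rfl⟩
  have hXh : Xᴴ = Q * B * (Q * Q) := by
    rw [hX]
    simp only [Matrix.conjTranspose_mul, hQh, hB, Matrix.mul_assoc]
  have hM4 : Q * (Q * (Q * Q)) = R * R := by
    rw [show Q * (Q * (Q * Q)) = (Q * Q) * (Q * Q) from by noncomm_ring, hQ2]
  have htr1 : (B * (R * R)).trace = (Xᴴ * Q).trace := by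
    have e1 : Xᴴ * Q = Q * (B * (Q * (Q * Q))) := by rw [hXh]; noncomm_ring
    rw [e1, Matrix.trace_mul_comm Q (B * (Q * (Q * Q)))]
    rw [← hM4]
    congr 1
    noncomm_ring
  have htr2 : (Xᴴ * X).trace.re ≤ R.trace.re := by
    have hconj : (Qᴴ * (1 - B * (R * R) * B) * Q).PosSemidef :=
      h1.conjTranspose_mul_mul_same Q
    have he : Qᴴ * (1 - B * (R * R) * B) * Q = R - Xᴴ * X := by
      rw [hXh, hX, hQh, ← hQ2]
      noncomm_ring
    rw [he] at hconj
    exact trace_re_mono hconj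
  have htr3 : (Qᴴ * Q).trace.re = R.trace.re := by rw [hQh, hQ2]
  calc ((B * (R * R)).trace).re = ((Xᴴ * Q).trace).re := by rw [htr1]
    _ ≤ ‖(Xᴴ * Q).trace‖ := Complex.re_le_norm _
    _ ≤ Real.sqrt ((Xᴴ*X).trace.re) * Real.sqrt ((Qᴴ*Q).trace.re) := trace_cs X Q
    _ ≤ Real.sqrt (R.trace.re) * Real.sqrt (R.trace.re) :=
        mul_le_mul (Real.sqrt_le_sqrt htr2) (le_of_eq (by rw [htr3]))
          (Real.sqrt_nonneg _) (Real.sqrt_nonneg _)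
    _ = R.trace.re := Real.mul_self_sqrt hRtr

lemma key_step {B M : Matrix d d ℂ} (hB : Bᴴ = B) (hM : M.PosSemidef)
    (h1 : (1 - B * M * B).PosSemidef) :
    ((B * M).trace).re ≤ (msqrt M).trace.re := by
  have hRR : msqrt M * msqrt M = M := msqrt_mul_self hM
  have hRtr : 0 ≤ (msqrt M).trace.re := trace_re_nonneg (msqrt_psd M)
  have := key_step' hB (msqrt_herm (msqrt M)) (msqrt_mul_self (msqrt_psd M)) hRtr
    (by rw [hRR]; exact h1)
  rwa [hRR] at this

lemma trace_msqrt_add_le {M N : Matrix d d ℂ} (hM : M.PosSemidef) (hN : N.PosSemidef) :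
    (msqrt (M + N)).trace.re ≤ (msqrt M).trace.re + (msqrt N).trace.re := by
  obtain ⟨B, hB, hBS, hP1, hPS⟩ := pinv_package (hM.add hN)
  have h1 : (msqrt (M + N)).trace = (B * M).trace + (B * N).trace := by
    rw [← hBS, Matrix.mul_add, Matrix.trace_add]
  have hM1 : (1 - B * M * B).PosSemidef := by
    have e : 1 - B * M * B = (1 - B * (M + N) * B) + Bᴴ * N * B := by
      rw [hB.1]
      noncomm_ring
    rw [e]
    exact hP1.add (hN.conjTranspose_mul_mul_same B)
  have hN1 : (1 - B * N * B).PosSemidef := by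
    have e : 1 - B * N * B = (1 - B * (M + N) * B) + Bᴴ * M * B := by
      rw [hB.1]
      noncomm_ring
    rw [e]
    exact hP1.add (hM.conjTranspose_mul_mul_same B)
  have e1 := key_step hB.1 hM hM1
  have e2 := key_step hB.1 hN hN1
  rw [h1, Complex.add_re]
  linarith

open scoped MatrixOrder in
lemma trace_msqrt_conjT (X : Matrix d d ℂ) :
    (msqrt (Xᴴ * X)).trace = (msqrt (X * Xᴴ)).trace := by
  obtain ⟨B, hB, hBS, hP1, hPS⟩ := pinv_package (Matrix.posSemidef_conjTranspose_mul_self X)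
  set P : Matrix d d ℂ := B * (Xᴴ * X) * B with hP
  have hBh : Bᴴ = B := hB.1
  have hPh : Pᴴ = P := by
    rw [hP]
    simp only [Matrix.conjTranspose_mul, hBh, Matrix.conjTranspose_conjTranspose,
      Matrix.mul_assoc]
  have hSP : (Xᴴ * X) * P = Xᴴ * X := by
    have h := congrArg Matrix.conjTranspose hPS
    simp only [Matrix.conjTranspose_mul, hPh, Matrix.conjTranspose_conjTranspose,
      ← Matrix.mul_assoc] at h
    exact h
  have hXP : X * P = X := by
    have hz : (X * P - X)ᴴ * (X * P - X) = 0 := by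
      have expand : (X * P - X)ᴴ * (X * P - X)
          = Pᴴ * ((Xᴴ * X) * P) - Pᴴ * (Xᴴ * X) - (Xᴴ * X) * P + Xᴴ * X := by
        simp only [Matrix.conjTranspose_sub, Matrix.conjTranspose_mul, hPh]
        noncomm_ring
      rw [expand, hSP]
      have hps : Pᴴ * (Xᴴ * X) = Xᴴ * X := by rw [hPh, hPS]
      rw [hps]
      noncomm_ring
    have := Matrix.conjTranspose_mul_self_eq_zero.mp hz
    exact sub_eq_zero.mp this
  have hKpsd : (X * B * Xᴴ).PosSemidef := hB.mul_mul_conjTranspose_same X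
  have hK2 : (X * B * Xᴴ) ^ 2 = X * Xᴴ := by
    have e : (X * B * Xᴴ) ^ 2 = X * P * Xᴴ := by
      rw [hP]
      noncomm_ring
    rw [e, hXP]
  have hKeq : X * B * Xᴴ = msqrt (X * Xᴴ) := by
    rw [msqrt_eq (Matrix.posSemidef_self_mul_conjTranspose X)]
    exact ((CFC.sqrt_eq_iff _ _ (Matrix.posSemidef_self_mul_conjTranspose X).nonneg
      hKpsd.nonneg).mpr (by rw [← sq]; exact hK2)).symm
  calc (msqrt (Xᴴ * X)).trace = (B * (Xᴴ * X)).trace := by rw [hBS]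
    _ = ((B * Xᴴ) * X).trace := by rw [Matrix.mul_assoc]
    _ = (X * (B * Xᴴ)).trace := (Matrix.trace_mul_comm _ _)
    _ = (X * B * Xᴴ).trace := by rw [Matrix.mul_assoc]
    _ = (msqrt (X * Xᴴ)).trace := by rw [hKeq]
lemma fid_symm {A B : Matrix d d ℂ} (hA : A.PosSemidef) (hB : B.PosSemidef) :
    fid A B = fid B A := by
  have e1 : msqrt A * B * msqrt A = (msqrt B * msqrt A)ᴴ * (msqrt B * msqrt A) := by
    rw [Matrix.conjTranspose_mul, msqrt_herm, msqrt_herm,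
      show msqrt A * msqrt B * (msqrt B * msqrt A)
        = msqrt A * (msqrt B * msqrt B) * msqrt A from by noncomm_ring,
      msqrt_mul_self hB]
  have e2 : msqrt B * A * msqrt B = (msqrt B * msqrt A) * (msqrt B * msqrt A)ᴴ := by
    rw [Matrix.conjTranspose_mul, msqrt_herm, msqrt_herm,
      show msqrt B * msqrt A * (msqrt A * msqrt B)
        = msqrt B * (msqrt A * msqrt A) * msqrt B from by noncomm_ring,
      msqrt_mul_self hA]
  rw [fid, fid, e1, e2, trace_msqrt_conjT]

lemma psd_smul {M : Matrix d d ℂ} (hM : M.PosSemidef) {r : ℝ} (hr : 0 ≤ r) :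
    (((r : ℝ) : ℂ) • M).PosSemidef := by
  constructor
  · rw [Matrix.IsHermitian, Matrix.conjTranspose_smul]
    rw [show ((star ((r : ℝ) : ℂ)) : ℂ) = ((r : ℝ) : ℂ) from by
      simp [Complex.star_def, Complex.conj_ofReal]]
    rw [hM.1]
  · intro x
    exact (hM.smul (Complex.zero_le_real.mpr hr)).2 x

open scoped MatrixOrder in
lemma msqrt_smul (r : ℝ) (hr : 0 ≤ r) (M : Matrix d d ℂ) :
    msqrt (((r : ℝ) : ℂ) • M) = ((Real.sqrt r : ℝ) : ℂ) • msqrt M := by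
  by_cases hM : M.PosSemidef
  · have h1 : (((r : ℝ) : ℂ) • M).PosSemidef := psd_smul hM hr
    have h2 : (((Real.sqrt r : ℝ) : ℂ) • msqrt M).PosSemidef :=
      psd_smul (msqrt_psd M) (Real.sqrt_nonneg r)
    rw [msqrt_eq h1]
    refine (CFC.sqrt_eq_iff _ _ h1.nonneg h2.nonneg).mpr ?_
    rw [← sq]
    rw [smul_pow, pow_two, pow_two, msqrt_mul_self hM]
    congr 1
    rw [← Complex.ofReal_mul, Real.mul_self_sqrt hr]
  · by_cases hr0 : r = 0
    · subst hr0
      simp [msqrt_zero]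
    · have hns : ¬ (((r : ℝ) : ℂ) • M).PosSemidef := by
        intro hc
        apply hM
        have h3 := psd_smul hc (inv_nonneg.mpr hr)
        rwa [smul_smul, show (((r⁻¹ : ℝ) : ℂ)) * ((r : ℝ) : ℂ) = 1 from by
          rw [← Complex.ofReal_mul, inv_mul_cancel₀ hr0, Complex.ofReal_one],
          one_smul] at h3
      rw [msqrt, dif_neg hns, msqrt, dif_neg hM, smul_zero]

lemma fid_smul (r : ℝ) (hr : 0 ≤ r) (A B : Matrix d d ℂ) :
    fid (((r : ℝ) : ℂ) • A) (((r : ℝ) : ℂ) • B) = r * fid A B := by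
  rw [fid, fid, msqrt_smul r hr]
  have e : ((Real.sqrt r : ℝ) : ℂ) • msqrt A * (((r : ℝ) : ℂ) • B)
      * (((Real.sqrt r : ℝ) : ℂ) • msqrt A)
      = (((r^2 : ℝ) : ℝ) : ℂ) • (msqrt A * B * msqrt A) := by
    rw [Matrix.smul_mul, Matrix.mul_smul, Matrix.smul_mul, Matrix.mul_smul,
      Matrix.smul_mul, smul_smul, smul_smul]
    congr 1
    rw [← Complex.ofReal_mul, ← Complex.ofReal_mul]
    congr 1
    rw [Real.mul_self_sqrt hr, sq]
  rw [e, msqrt_smul _ (sq_nonneg r), Real.sqrt_sq hr, Matrix.trace_smul,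
    smul_eq_mul, Complex.mul_re]
  simp

lemma fid_zero_right (A : Matrix d d ℂ) : fid A 0 = 0 := by
  rw [fid, Matrix.mul_zero, Matrix.zero_mul, msqrt_zero]
  simp

lemma fid_add_right {A X Y : Matrix d d ℂ} (hX : X.PosSemidef) (hY : Y.PosSemidef) :
    fid A (X + Y) ≤ fid A X + fid A Y := by
  rw [fid, fid, fid]
  have e : msqrt A * (X + Y) * msqrt A = msqrt A * X * msqrt A + msqrt A * Y * msqrt A := by
    noncomm_ring
  rw [e]
  have h1 : (msqrt A * X * msqrt A).PosSemidef := by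
    rw [show msqrt A * X * msqrt A = (msqrt A)ᴴ * X * msqrt A from by rw [msqrt_herm]]
    exact hX.conjTranspose_mul_mul_same (msqrt A)
  have h2 : (msqrt A * Y * msqrt A).PosSemidef := by
    rw [show msqrt A * Y * msqrt A = (msqrt A)ᴴ * Y * msqrt A from by rw [msqrt_herm]]
    exact hY.conjTranspose_mul_mul_same (msqrt A)
  exact trace_msqrt_add_le h1 h2

lemma psd_sum {ι : Type*} (s : Finset ι) (f : ι → Matrix d d ℂ)
    (hf : ∀ i ∈ s, (f i).PosSemidef) : (∑ i ∈ s, f i).PosSemidef :=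
  Finset.sum_induction f _ (fun _ _ ha hb => ha.add hb) Matrix.PosSemidef.zero hf

lemma fid_sum_right {ι : Type*} (A : Matrix d d ℂ)
    (s : Finset ι) (f : ι → Matrix d d ℂ) (hf : ∀ i ∈ s, (f i).PosSemidef) :
    fid A (∑ i ∈ s, f i) ≤ ∑ i ∈ s, fid A (f i) := by
  classical
  induction s using Finset.induction_on with
  | empty => simp [fid_zero_right]
  | @insert a s' hmem ih =>
    rw [Finset.sum_insert hmem, Finset.sum_insert hmem]
    have hfa : (f a).PosSemidef := hf a (Finset.mem_insert_self a s')
    have hfs : ∀ i ∈ s', (f i).PosSemidef := fun i hi =>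
      hf i (Finset.mem_insert_of_mem hi)
    calc fid A (f a + ∑ i ∈ s', f i)
        ≤ fid A (f a) + fid A (∑ i ∈ s', f i) :=
          fid_add_right hfa (psd_sum s' f hfs)
      _ ≤ fid A (f a) + ∑ i ∈ s', fid A (f i) := by linarith [ih hfs]

end FidAux

/-- union bound for fidelities of twirled states. -/
theorem fidelity_of_twirls_le
    {d : ℕ} (hd : 1 ≤ d)
    (ρ σ : Matrix (Fin d) (Fin d) ℂ)
    (hρ : ρ.PosSemidef) (hρtr : ρ.trace = 1)
    (hσ : σ.PosSemidef) (hσtr : σ.trace = 1)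
    (S : Finset (Matrix (Fin d) (Fin d) ℂ)) (hS : S.Nonempty)
    (hSU : ∀ U ∈ S, U ∈ Matrix.unitaryGroup (Fin d) ℂ)
    (ε : ℝ) (hε : 0 ≤ ε)
    (hfar : ∀ U ∈ S, ∀ V ∈ S, fid (V * ρ * Vᴴ) (U * σ * Uᴴ) ≤ ε) :
    fid (((S.card : ℂ))⁻¹ • ∑ U ∈ S, U * ρ * Uᴴ)
        (((S.card : ℂ))⁻¹ • ∑ U ∈ S, U * σ * Uᴴ) ≤ ε * S.card := by
  classical
  have hn0 : 0 < (S.card : ℝ) := by exact_mod_cast Finset.card_pos.mpr hS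
  have hinv : ((S.card : ℂ))⁻¹ = ((((S.card : ℝ)⁻¹ : ℝ)) : ℂ) := by
    rw [Complex.ofReal_inv, Complex.ofReal_natCast]
  have hρU : ∀ U ∈ S, (U * ρ * Uᴴ).PosSemidef := fun U _ =>
    hρ.mul_mul_conjTranspose_same U
  have hσU : ∀ U ∈ S, (U * σ * Uᴴ).PosSemidef := fun U _ =>
    hσ.mul_mul_conjTranspose_same U
  have hA : (∑ U ∈ S, U * ρ * Uᴴ).PosSemidef := FidAux.psd_sum _ _ hρU
  have step2 : ∀ U ∈ S, fid (∑ V ∈ S, V * ρ * Vᴴ) (U * σ * Uᴴ)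
      ≤ (S.card : ℝ) * ε := by
    intro U hU
    rw [FidAux.fid_symm hA (hσU U hU)]
    calc fid (U * σ * Uᴴ) (∑ V ∈ S, V * ρ * Vᴴ)
        ≤ ∑ V ∈ S, fid (U * σ * Uᴴ) (V * ρ * Vᴴ) :=
          FidAux.fid_sum_right _ S _ hρU
      _ ≤ ∑ _V ∈ S, ε := Finset.sum_le_sum fun V hV => by
          rw [FidAux.fid_symm (hσU U hU) (hρU V hV)]
          exact hfar U hU V hV
      _ = (S.card : ℝ) * ε := by rw [Finset.sum_const, nsmul_eq_mul]
  have step3 : fid (∑ U ∈ S, U * ρ * Uᴴ) (∑ U ∈ S, U * σ * Uᴴ)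
      ≤ (S.card : ℝ) * ((S.card : ℝ) * ε) := by
    calc fid (∑ U ∈ S, U * ρ * Uᴴ) (∑ U ∈ S, U * σ * Uᴴ)
        ≤ ∑ U ∈ S, fid (∑ V ∈ S, V * ρ * Vᴴ) (U * σ * Uᴴ) :=
          FidAux.fid_sum_right _ S _ hσU
      _ ≤ ∑ _U ∈ S, (S.card : ℝ) * ε := Finset.sum_le_sum step2
      _ = (S.card : ℝ) * ((S.card : ℝ) * ε) := by
          rw [Finset.sum_const, nsmul_eq_mul]
  rw [hinv, FidAux.fid_smul _ (inv_nonneg.mpr hn0.le)]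
  calc ((S.card : ℝ))⁻¹ * fid (∑ U ∈ S, U * ρ * Uᴴ) (∑ U ∈ S, U * σ * Uᴴ)
      ≤ ((S.card : ℝ))⁻¹ * ((S.card : ℝ) * ((S.card : ℝ) * ε)) :=
        mul_le_mul_of_nonneg_left step3 (inv_nonneg.mpr hn0.le)
    _ = ε * S.card := by
        field_simp
end

section
/- Let n ≥ 1, let σ > 0 be real, and let u, v ∈ ℝⁿ. Let μ be the product measure on ℝⁿ whose i-th factor is the real Gaussian measure with mean u_i and variance σ², and let ν be the analogous product measure with means v_i. Then for every measurable set A ⊆ ℝⁿ, |μ(A) − ν(A)| ≤ ‖u − v‖₂/(2σ), where ‖u − v‖₂ = √(∑_i (u_i − v_i)²). In particular, the total variation distance between the two isotropic Gaussian measures with common covariance σ²·I and means u, v is at most ‖u − v‖₂/(2σ). -/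
open MeasureTheory ProbabilityTheory
open MeasureTheory.Measure Set
open scoped ENNReal NNReal

lemma lintegral_pi_prod {n : ℕ} (f : Fin n → ℝ → ℝ≥0∞) (hf : ∀ i, Measurable (f i)) :
    ∫⁻ x : Fin n → ℝ, ∏ i, f i (x i) ∂(Measure.pi fun _ => (volume : Measure ℝ)) =
      ∏ i, ∫⁻ x, f i x := by
  induction n with
  | zero => simp [Measure.pi_univ]
  | succ n ih =>
      have h := ((measurePreserving_piFinSuccAbove
        (fun _ : Fin (n+1) => (volume : Measure ℝ)) 0).symm)
      rw [← h.lintegral_comp_emb (MeasurableEquiv.measurableEmbedding _)]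
      simp_rw [MeasurableEquiv.piFinSuccAbove_symm_apply, Fin.insertNthEquiv,
        Fin.prod_univ_succ, Fin.insertNth_zero]
      simp only [Fin.zero_succAbove, Function.comp_def, Fin.cons_zero, Fin.cons_succ, cast_eq,
        Equiv.coe_fn_mk]
      rw [lintegral_prod_mul (f := fun x => f 0 x)
        (g := fun y : Fin n → ℝ => ∏ j : Fin n, f j.succ (y j))
        (hf 0).aemeasurable
        (Measurable.aemeasurable (Finset.measurable_prod _
          (fun j _ => (hf j.succ).comp (measurable_pi_apply j))))]
      rw [ih (fun i => f i.succ) (fun i => hf i.succ)]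

lemma pi_withDensity {n : ℕ} (f : Fin n → ℝ → ℝ≥0∞) (hf : ∀ i, Measurable (f i))
    (hfin : ∀ i, ∫⁻ x, f i x ≠ ⊤) :
    Measure.pi (fun i => (volume : Measure ℝ).withDensity (f i)) =
      (Measure.pi fun _ => (volume : Measure ℝ)).withDensity (fun x => ∏ i, f i (x i)) := by
  haveI : ∀ i, SigmaFinite ((volume : Measure ℝ).withDensity (f i)) := by
    intro i
    haveI : IsFiniteMeasure ((volume : Measure ℝ).withDensity (f i)) := by
      constructor
      rw [withDensity_apply _ MeasurableSet.univ, Measure.restrict_univ]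
      exact (hfin i).lt_top
    infer_instance
  refine Measure.pi_eq fun s hs => ?_
  rw [withDensity_apply _ (MeasurableSet.pi countable_univ fun i _ => hs i)]
  rw [← lintegral_indicator (MeasurableSet.pi countable_univ fun i _ => hs i) (fun x : Fin n → ℝ => ∏ i, f i (x i))]
  have hind : ∀ x : Fin n → ℝ,
      (Set.pi Set.univ s).indicator (fun x => ∏ i, f i (x i)) x =
        ∏ i, (s i).indicator (f i) (x i) := by
    intro x
    by_cases hx : x ∈ Set.pi Set.univ s
    · rw [Set.indicator_of_mem hx]
      exact Finset.prod_congr rfl fun i _ =>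
        (Set.indicator_of_mem (hx i (Set.mem_univ i)) _).symm
    · rw [Set.indicator_of_notMem hx]
      rw [Set.mem_univ_pi] at hx
      push_neg at hx
      obtain ⟨i, hi⟩ := hx
      exact (Finset.prod_eq_zero (Finset.mem_univ i)
        (Set.indicator_of_notMem hi _)).symm
  simp_rw [hind]
  rw [lintegral_pi_prod (fun i => (s i).indicator (f i))
    (fun i => (hf i).indicator (hs i))]
  exact Finset.prod_congr rfl fun i _ => by
    rw [lintegral_indicator (hs i), withDensity_apply _ (hs i)]
lemma mul_integrable_of_sq {α : Type*} [MeasurableSpace α] {μ : Measure α} {f g : α → ℝ}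
    (hfm : AEStronglyMeasurable f μ) (hgm : AEStronglyMeasurable g μ)
    (hf2 : Integrable (fun x => f x ^ 2) μ) (hg2 : Integrable (fun x => g x ^ 2) μ) :
    Integrable (fun x => f x * g x) μ := by
  refine Integrable.mono ((hf2.add hg2).div_const 2) (hfm.mul hgm) (ae_of_all _ fun x => ?_)
  simp only [Pi.add_apply, Real.norm_eq_abs, abs_mul]
  rw [abs_div, abs_of_nonneg (by positivity : (0:ℝ) ≤ f x ^ 2 + g x ^ 2),
    abs_of_nonneg (by norm_num : (0:ℝ) ≤ (2:ℝ))]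
  nlinarith [abs_nonneg (f x), abs_nonneg (g x), sq_abs (f x), sq_abs (g x),
    sq_nonneg (|f x| - |g x|)]

/-- Cauchy–Schwarz for integrals of nonnegative functions. -/
lemma integral_mul_le_sqrt_mul_sqrt {α : Type*} [MeasurableSpace α] (μ : Measure α) (f g : α → ℝ)
    (hfm : AEStronglyMeasurable f μ) (hgm : AEStronglyMeasurable g μ)
    (hf2 : Integrable (fun x => f x ^ 2) μ) (hg2 : Integrable (fun x => g x ^ 2) μ) :
    ∫ x, f x * g x ∂μ ≤
      Real.sqrt (∫ x, f x ^ 2 ∂μ) * Real.sqrt (∫ x, g x ^ 2 ∂μ) := by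
  have hfg : Integrable (fun x => f x * g x) μ := mul_integrable_of_sq hfm hgm hf2 hg2
  set A := ∫ x, f x ^ 2 ∂μ with hA
  set B := ∫ x, g x ^ 2 ∂μ with hB
  have hA0 : 0 ≤ A := integral_nonneg fun x => sq_nonneg _
  have hB0 : 0 ≤ B := integral_nonneg fun x => sq_nonneg _
  by_cases hAz : A = 0
  · have h0 : (fun x => f x ^ 2) =ᵐ[μ] 0 := by
      rw [← integral_eq_zero_iff_of_nonneg (fun x => sq_nonneg (f x)) hf2]
      exact hAz
    have hzero : (fun x => f x * g x) =ᵐ[μ] (fun _ => (0:ℝ)) := by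
      filter_upwards [h0] with x hx
      simp only [Pi.zero_apply] at hx
      have : f x = 0 := by nlinarith [sq_nonneg (f x)]
      simp [this]
    rw [integral_congr_ae hzero, integral_zero]
    positivity
  have hApos : 0 < A := lt_of_le_of_ne hA0 (Ne.symm hAz)
  by_cases hBz : B = 0
  · have h0 : (fun x => g x ^ 2) =ᵐ[μ] 0 := by
      rw [← integral_eq_zero_iff_of_nonneg (fun x => sq_nonneg (g x)) hg2]
      exact hBz
    have hzero : (fun x => f x * g x) =ᵐ[μ] (fun _ => (0:ℝ)) := by
      filter_upwards [h0] with x hx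
      simp only [Pi.zero_apply] at hx
      have : g x = 0 := by nlinarith [sq_nonneg (g x)]
      simp [this]
    rw [integral_congr_ae hzero, integral_zero]
    positivity
  have hBpos : 0 < B := lt_of_le_of_ne hB0 (Ne.symm hBz)
  set t : ℝ := Real.sqrt A / Real.sqrt B with ht
  have hsApos : 0 < Real.sqrt A := Real.sqrt_pos.mpr hApos
  have hsBpos : 0 < Real.sqrt B := Real.sqrt_pos.mpr hBpos
  have htpos : 0 < t := div_pos hsApos hsBpos
  have h2t : (0:ℝ) < 2 * t := by linarith
  have hpt : ∀ x, f x * g x ≤ f x ^ 2 / (2 * t) + t * g x ^ 2 / 2 := by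
    intro x
    have h1 : f x * g x ≤ (f x ^ 2 + t ^ 2 * g x ^ 2) / (2 * t) := by
      rw [le_div_iff₀ h2t]
      nlinarith [sq_nonneg (f x - t * g x)]
    have h2 : (f x ^ 2 + t ^ 2 * g x ^ 2) / (2 * t) = f x ^ 2 / (2 * t) + t * g x ^ 2 / 2 := by
      field_simp
    rw [← h2]
    exact h1
  have hint : ∫ x, f x * g x ∂μ ≤ ∫ x, (f x ^ 2 / (2 * t) + t * g x ^ 2 / 2) ∂μ :=
    integral_mono hfg ((hf2.div_const _).add ((hg2.const_mul t).div_const 2)) hpt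
  have hval : ∫ x, (f x ^ 2 / (2 * t) + t * g x ^ 2 / 2) ∂μ = A / (2 * t) + t * B / 2 := by
    rw [integral_add (hf2.div_const _) ((hg2.const_mul t).div_const 2),
      integral_div, integral_div, integral_const_mul]
  have e1 : t * B = Real.sqrt A * Real.sqrt B := by
    rw [ht, div_mul_eq_mul_div, mul_div_assoc, Real.div_sqrt]
  have e2 : A / t = Real.sqrt A * Real.sqrt B := by
    rw [ht, div_div_eq_mul_div, mul_comm, mul_div_assoc, Real.div_sqrt, mul_comm]
  have e3 : A / (2 * t) = A / t / 2 := by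
    rw [div_div]
    ring_nf
  calc ∫ x, f x * g x ∂μ ≤ A / (2 * t) + t * B / 2 := by rw [← hval]; exact hint
    _ = Real.sqrt A * Real.sqrt B := by rw [e3, e2, e1]; ring
lemma sqrt_gaussian_mul (σ : ℝ) (hσ : 0 < σ) (a b x : ℝ) :
    Real.sqrt (ProbabilityTheory.gaussianPDFReal a (Real.toNNReal (σ^2)) x *
        ProbabilityTheory.gaussianPDFReal b (Real.toNNReal (σ^2)) x)
      = Real.exp (-(a-b)^2/(8*σ^2)) *
        ProbabilityTheory.gaussianPDFReal ((a+b)/2) (Real.toNNReal (σ^2)) x := by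
  have hV : ((Real.toNNReal (σ^2) : NNReal) : ℝ) = σ^2 := Real.coe_toNNReal _ (sq_nonneg σ)
  simp only [ProbabilityTheory.gaussianPDFReal, hV]
  set c := (Real.sqrt (2 * Real.pi * σ^2))⁻¹ with hc
  have hc0 : 0 ≤ c := by positivity
  have h1 : c * Real.exp (-(x - a)^2 / (2 * σ^2)) * (c * Real.exp (-(x - b)^2 / (2 * σ^2)))
      = c^2 * Real.exp (-(x - a)^2 / (2 * σ^2) + -(x - b)^2 / (2 * σ^2)) := by
    rw [Real.exp_add]; ring
  rw [h1, Real.sqrt_mul (sq_nonneg c), Real.sqrt_sq hc0, ← Real.exp_half]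
  have hσ2 : σ^2 ≠ 0 := by positivity
  have hexp : (-(x - a)^2 / (2 * σ^2) + -(x - b)^2 / (2 * σ^2)) / 2
      = -(a-b)^2/(8*σ^2) + -(x - (a+b)/2)^2 / (2 * σ^2) := by
    field_simp
    ring
  rw [hexp, Real.exp_add]
  ring
lemma sqrt_finset_prod {ι : Type*} (s : Finset ι) (f : ι → ℝ) (h : ∀ i ∈ s, 0 ≤ f i) :
    Real.sqrt (∏ i ∈ s, f i) = ∏ i ∈ s, Real.sqrt (f i) := by
  induction s using Finset.cons_induction with
  | empty => simp
  | cons a s ha ih =>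
      rw [Finset.prod_cons, Finset.prod_cons,
        Real.sqrt_mul (h a (Finset.mem_cons_self a s)),
        ih fun i hi => h i (Finset.mem_cons_of_mem hi)]

open ProbabilityTheory in
/-- toReal of a Gaussian product measure of a set as a set integral of the density product. -/
lemma gaussian_pi_apply_toReal {n : ℕ} (σ : ℝ) (hσ : 0 < σ) (w : Fin n → ℝ)
    {A : Set (Fin n → ℝ)} (hA : MeasurableSet A) :
    (Measure.pi (fun i => gaussianReal (w i) (Real.toNNReal (σ ^ 2))) A).toReal =
      ∫ x in A, (∏ i, gaussianPDFReal (w i) (Real.toNNReal (σ ^ 2)) (x i)) := by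
  set V : NNReal := Real.toNNReal (σ ^ 2) with hVdef
  have hV0 : V ≠ 0 := by
    simp only [hVdef, ne_eq, Real.toNNReal_eq_zero, not_le]
    positivity
  have hden : ∀ i : Fin n, gaussianReal (w i) V =
      (volume : Measure ℝ).withDensity
        (fun x => ENNReal.ofReal (gaussianPDFReal (w i) V x)) := by
    intro i
    rw [gaussianReal_of_var_ne_zero _ hV0]
    rfl
  have hπ : Measure.pi (fun i => gaussianReal (w i) V) =
      (Measure.pi fun _ => (volume : Measure ℝ)).withDensity
        (fun x => ENNReal.ofReal (∏ i, gaussianPDFReal (w i) V (x i))) := by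
    have := pi_withDensity
      (fun i x => ENNReal.ofReal (gaussianPDFReal (w i) V x))
      (fun i => (measurable_gaussianPDFReal _ _).ennreal_ofReal)
      (fun i => by
        rw [← ofReal_integral_eq_lintegral_ofReal (integrable_gaussianPDFReal _ _)
          (ae_of_all _ (gaussianPDFReal_nonneg _ _)), integral_gaussianPDFReal_eq_one _ hV0]
        simp)
    simp_rw [hden]
    rw [this]
    congr 1
    funext x
    rw [ENNReal.ofReal_prod_of_nonneg fun i _ => gaussianPDFReal_nonneg _ _ _]
  rw [hπ, withDensity_apply _ hA]
  rw [← volume_pi]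
  rw [integral_eq_lintegral_of_nonneg_ae
    (ae_of_all _ fun x => Finset.prod_nonneg fun i _ => gaussianPDFReal_nonneg _ _ _)
    ((Finset.measurable_prod Finset.univ fun i _ =>
      (measurable_gaussianPDFReal _ _).comp (measurable_pi_apply i)).aestronglyMeasurable)]

/-- the total variation distance between two isotropic Gaussian
product measures on ℝⁿ with common variance σ² and means u, v is at most
`‖u − v‖₂ / (2σ)`. -/
theorem gaussian_product_tv_bound
    {n : ℕ} (hn : 1 ≤ n) (σ : ℝ) (hσ : 0 < σ) (u v : Fin n → ℝ)
    (A : Set (Fin n → ℝ)) (hA : MeasurableSet A) :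
    |(Measure.pi (fun i => gaussianReal (u i) (Real.toNNReal (σ ^ 2))) A).toReal -
        (Measure.pi (fun i => gaussianReal (v i) (Real.toNNReal (σ ^ 2))) A).toReal|
      ≤ Real.sqrt (∑ i, (u i - v i) ^ 2) / (2 * σ) := by
  classical
  set V : NNReal := Real.toNNReal (σ ^ 2) with hVdef
  have hV0 : V ≠ 0 := by
    simp only [hVdef, ne_eq, Real.toNNReal_eq_zero, not_le]
    positivity
  set F : (Fin n → ℝ) → ℝ := fun x => ∏ i, gaussianPDFReal (u i) V (x i) with hFdef
  set G : (Fin n → ℝ) → ℝ := fun x => ∏ i, gaussianPDFReal (v i) V (x i) with hGdef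
  set H : (Fin n → ℝ) → ℝ :=
    fun x => ∏ i, gaussianPDFReal ((u i + v i) / 2) V (x i) with hHdef
  have hFm : Measurable F := Finset.measurable_prod _ fun i _ =>
    (measurable_gaussianPDFReal _ _).comp (measurable_pi_apply i)
  have hGm : Measurable G := Finset.measurable_prod _ fun i _ =>
    (measurable_gaussianPDFReal _ _).comp (measurable_pi_apply i)
  have hHm : Measurable H := Finset.measurable_prod _ fun i _ =>
    (measurable_gaussianPDFReal _ _).comp (measurable_pi_apply i)
  have hF0 : ∀ x, 0 ≤ F x := fun x =>
    Finset.prod_nonneg fun i _ => gaussianPDFReal_nonneg _ _ _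
  have hG0 : ∀ x, 0 ≤ G x := fun x =>
    Finset.prod_nonneg fun i _ => gaussianPDFReal_nonneg _ _ _
  have hH0 : ∀ x, 0 ≤ H x := fun x =>
    Finset.prod_nonneg fun i _ => gaussianPDFReal_nonneg _ _ _
  have hFi : Integrable F := by
    rw [hFdef]
    exact Integrable.fintype_prod fun i => integrable_gaussianPDFReal _ _
  have hGi : Integrable G := by
    rw [hGdef]
    exact Integrable.fintype_prod fun i => integrable_gaussianPDFReal _ _
  have hHi : Integrable H := by
    rw [hHdef]
    exact Integrable.fintype_prod fun i => integrable_gaussianPDFReal _ _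
  have hFint : ∫ x, F x = 1 := by
    rw [hFdef, volume_pi]; beta_reduce; rw [integral_fintype_prod_eq_prod (ι := Fin n) (fun i => gaussianPDFReal (u i) V)]
    simp [integral_gaussianPDFReal_eq_one _ hV0]
  have hGint : ∫ x, G x = 1 := by
    rw [hGdef, volume_pi]; beta_reduce; rw [integral_fintype_prod_eq_prod (ι := Fin n) (fun i => gaussianPDFReal (v i) V)]
    simp [integral_gaussianPDFReal_eq_one _ hV0]
  have hHint : ∫ x, H x = 1 := by
    rw [hHdef, volume_pi]; beta_reduce; rw [integral_fintype_prod_eq_prod (ι := Fin n)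
      (fun i => gaussianPDFReal ((u i + v i) / 2) V)]
    simp [integral_gaussianPDFReal_eq_one _ hV0]
  -- the Bhattacharyya coefficient
  set S : ℝ := ∑ i, (u i - v i) ^ 2 with hSdef
  have hS0 : 0 ≤ S := Finset.sum_nonneg fun i _ => sq_nonneg _
  set ρ : ℝ := Real.exp (-S / (8 * σ ^ 2)) with hρdef
  have hρpos : 0 < ρ := Real.exp_pos _
  have hnd : -S / (8 * σ ^ 2) = -(S / (8 * σ ^ 2)) := neg_div _ _
  have hρle : ρ ≤ 1 := by
    rw [hρdef, Real.exp_le_one_iff]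
    have : 0 ≤ S / (8 * σ ^ 2) := by positivity
    linarith [hnd]
  -- pointwise: √F √G = ρ H
  have hsq : ∀ x, Real.sqrt (F x) * Real.sqrt (G x) = ρ * H x := by
    intro x
    rw [← Real.sqrt_mul (hF0 x), hFdef, hGdef, ← Finset.prod_mul_distrib,
      sqrt_finset_prod _ _ (fun i _ =>
        mul_nonneg (gaussianPDFReal_nonneg _ _ _) (gaussianPDFReal_nonneg _ _ _))]
    have : ∀ i ∈ Finset.univ, Real.sqrt (gaussianPDFReal (u i) V (x i) *
        gaussianPDFReal (v i) V (x i)) =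
        Real.exp (-(u i - v i) ^ 2 / (8 * σ ^ 2)) *
          gaussianPDFReal ((u i + v i) / 2) V (x i) :=
      fun i _ => sqrt_gaussian_mul σ hσ (u i) (v i) (x i)
    rw [Finset.prod_congr rfl this, Finset.prod_mul_distrib, ← Real.exp_sum]
    have hsum : ∑ i, -(u i - v i) ^ 2 / (8 * σ ^ 2) = -S / (8 * σ ^ 2) := by
      rw [hSdef, ← Finset.sum_div, ← Finset.sum_neg_distrib]
    rw [hsum]
  -- define p and q for Cauchy-Schwarz
  set p : (Fin n → ℝ) → ℝ := fun x => |Real.sqrt (F x) - Real.sqrt (G x)| with hpdef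
  set q : (Fin n → ℝ) → ℝ := fun x => Real.sqrt (F x) + Real.sqrt (G x) with hqdef
  have hpm : AEStronglyMeasurable p volume :=
    ((hFm.sqrt.sub hGm.sqrt).abs).aestronglyMeasurable
  have hqm : AEStronglyMeasurable q volume :=
    (hFm.sqrt.add hGm.sqrt).aestronglyMeasurable
  have hp2 : (fun x => p x ^ 2) = fun x => F x + G x - 2 * (ρ * H x) := by
    funext x
    rw [hpdef]
    simp only [sq_abs]
    rw [sub_sq, Real.sq_sqrt (hF0 x), Real.sq_sqrt (hG0 x), ← hsq x]
    ring
  have hq2 : (fun x => q x ^ 2) = fun x => F x + G x + 2 * (ρ * H x) := by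
    funext x
    rw [hqdef]
    rw [add_sq, Real.sq_sqrt (hF0 x), Real.sq_sqrt (hG0 x), ← hsq x]
    ring
  have hFGi : Integrable (fun x => F x + G x) := hFi.add hGi
  have hρHi : Integrable (fun x => 2 * (ρ * H x)) := (hHi.const_mul ρ).const_mul 2
  have hp2i : Integrable (fun x => p x ^ 2) := by
    rw [hp2]; exact hFGi.sub hρHi
  have hq2i : Integrable (fun x => q x ^ 2) := by
    rw [hq2]; exact hFGi.add hρHi
  have hFGint : ∫ x, (F x + G x) = 2 := by
    rw [integral_add hFi hGi, hFint, hGint]; norm_num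
  have hρHint : ∫ x, 2 * (ρ * H x) = 2 * ρ := by
    rw [integral_const_mul, integral_const_mul, hHint]; ring
  have hp2int : ∫ x, p x ^ 2 = 2 - 2 * ρ := by
    rw [hp2, integral_sub hFGi hρHi, hFGint, hρHint]
  have hq2int : ∫ x, q x ^ 2 = 2 + 2 * ρ := by
    rw [hq2, integral_add hFGi hρHi, hFGint, hρHint]
  -- Cauchy-Schwarz
  have hpq : ∀ x, p x * q x = |F x - G x| := by
    intro x
    simp only [hpdef, hqdef]
    rw [← abs_of_nonneg (by positivity : (0:ℝ) ≤ Real.sqrt (F x) + Real.sqrt (G x)), ← abs_mul]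
    congr 1
    have h1 := Real.sq_sqrt (hF0 x)
    have h2 := Real.sq_sqrt (hG0 x)
    nlinarith [h1, h2]
  have hCS : ∫ x, |F x - G x| ≤ Real.sqrt (2 - 2 * ρ) * Real.sqrt (2 + 2 * ρ) := by
    have := integral_mul_le_sqrt_mul_sqrt volume p q hpm hqm hp2i hq2i
    rw [hp2int, hq2int] at this
    calc ∫ x, |F x - G x| = ∫ x, p x * q x := by
          exact integral_congr_ae (ae_of_all _ fun x => (hpq x).symm)
      _ ≤ _ := this
  -- half L1 bound
  set D : (Fin n → ℝ) → ℝ := fun x => F x - G x with hDdef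
  have hDi : Integrable D := hFi.sub hGi
  have hDtot : ∫ x, D x = 0 := by
    rw [hDdef]
    rw [integral_sub hFi hGi, hFint, hGint]
    ring
  have hsplit : (∫ x in A, D x) + ∫ x in Aᶜ, D x = ∫ x, D x := integral_add_compl hA hDi
  have habs_split : (∫ x in A, |D x|) + ∫ x in Aᶜ, |D x| = ∫ x, |D x| :=
    integral_add_compl hA hDi.abs
  have h1 : ∫ x in A, D x ≤ ∫ x in A, |D x| :=
    integral_mono hDi.integrableOn hDi.abs.integrableOn fun x => le_abs_self _
  have h2 : ∫ x in Aᶜ, D x ≤ ∫ x in Aᶜ, |D x| :=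
    integral_mono hDi.integrableOn hDi.abs.integrableOn fun x => le_abs_self _
  have h3 : -(∫ x in A, D x) ≤ ∫ x in A, |D x| := by
    rw [← integral_neg]
    exact integral_mono hDi.neg.integrableOn hDi.abs.integrableOn fun x => neg_le_abs _
  have h4 : -(∫ x in Aᶜ, D x) ≤ ∫ x in Aᶜ, |D x| := by
    rw [← integral_neg]
    exact integral_mono hDi.neg.integrableOn hDi.abs.integrableOn fun x => neg_le_abs _
  have hhalf : |∫ x in A, D x| ≤ (∫ x, |D x|) / 2 := by
    rw [hDtot] at hsplit
    rw [abs_le]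
    constructor
    · linarith [habs_split, h2, h3, hsplit]
    · linarith [habs_split, h1, h4, hsplit]
  -- identify LHS
  have hLHS : |(Measure.pi (fun i => gaussianReal (u i) V) A).toReal -
      (Measure.pi (fun i => gaussianReal (v i) V) A).toReal| = |∫ x in A, D x| := by
    rw [gaussian_pi_apply_toReal σ hσ u hA, gaussian_pi_apply_toReal σ hσ v hA]
    congr 1
    rw [hDdef, integral_sub hFi.integrableOn hGi.integrableOn]
  rw [hLHS]
  -- final computation
  have hfinal : Real.sqrt (2 - 2 * ρ) * Real.sqrt (2 + 2 * ρ) / 2 ≤ Real.sqrt S / (2 * σ) := by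
    have h2ρ : 0 ≤ 2 - 2 * ρ := by linarith
    rw [← Real.sqrt_mul h2ρ]
    have hexp : 1 - 2 * (S / (8 * σ ^ 2)) ≤ ρ ^ 2 := by
      have ha := Real.add_one_le_exp (-S / (8 * σ ^ 2) + -S / (8 * σ ^ 2))
      have hρsq : ρ ^ 2 = Real.exp (-S / (8 * σ ^ 2) + -S / (8 * σ ^ 2)) := by
        rw [hρdef, sq, ← Real.exp_add]
      rw [hρsq]
      linarith [ha, hnd]
    have hle : (2 - 2 * ρ) * (2 + 2 * ρ) ≤ S / σ ^ 2 := by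
      have : (2 - 2 * ρ) * (2 + 2 * ρ) = 4 * (1 - ρ ^ 2) := by ring
      rw [this]
      have hσ2 : (0:ℝ) < σ ^ 2 := by positivity
      have : 4 * (1 - ρ ^ 2) ≤ 4 * (2 * (S / (8 * σ ^ 2))) := by linarith
      calc 4 * (1 - ρ ^ 2) ≤ 4 * (2 * (S / (8 * σ ^ 2))) := this
        _ = S / σ ^ 2 := by field_simp; ring
    have hsqle : Real.sqrt ((2 - 2 * ρ) * (2 + 2 * ρ)) ≤ Real.sqrt (S / σ ^ 2) :=
      Real.sqrt_le_sqrt hle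
    have hval : Real.sqrt (S / σ ^ 2) = Real.sqrt S / σ := by
      rw [Real.sqrt_div hS0, Real.sqrt_sq hσ.le]
    rw [hval] at hsqle
    rw [div_le_div_iff₀ (by norm_num) (by positivity)]
    calc Real.sqrt ((2 - 2 * ρ) * (2 + 2 * ρ)) * (2 * σ)
        ≤ (Real.sqrt S / σ) * (2 * σ) := by
          apply mul_le_mul_of_nonneg_right hsqle (by positivity)
      _ = Real.sqrt S * 2 := by field_simp
  calc |∫ x in A, D x| ≤ (∫ x, |D x|) / 2 := hhalf
    _ ≤ Real.sqrt (2 - 2 * ρ) * Real.sqrt (2 + 2 * ρ) / 2 := by linarith [hCS]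
    _ ≤ Real.sqrt S / (2 * σ) := hfinal
end

section
/- Let n ≥ 1, let C be a 2ⁿ×2ⁿ complex unitary matrix (rows and columns indexed by bit strings x : Fin n → Fin 2), and let π be a permutation of Fin n. For i ∈ Fin n let Z_i be the diagonal matrix with (Z_i)_{x,x} = (−1)^{x(i)}. If Cᴴ·Z_i·C = Z_{π(i)} for every i ∈ Fin n, then there exist a permutation τ of Fin n and a diagonal matrix D all of whose diagonal entries have modulus 1 such that C = U_τ·D, where U_τ is the qubit-permutation unitary. -/
open Matrix

lemma neg_one_pow_fin2_inj (a b : Fin 2)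
    (h : ((-1 : ℂ)) ^ (a : ℕ) = (-1 : ℂ) ^ (b : ℕ)) : a = b := by
  fin_cases a <;> fin_cases b <;> simp_all <;> norm_num at h

/-- a unitary conjugating every `Z_i` to `Z_{π(i)}` is a qubit
permutation unitary times a diagonal phase matrix. -/
theorem clifford_permuting_Z_is_perm_times_diagonal
    {n : ℕ} (hn : 1 ≤ n) (C : Matrix (Fin n → Fin 2) (Fin n → Fin 2) ℂ)
    (hC : C ∈ Matrix.unitaryGroup (Fin n → Fin 2) ℂ)
    (π : Equiv.Perm (Fin n))
    (hconj : ∀ i : Fin n,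
      Cᴴ * Matrix.diagonal (fun x : Fin n → Fin 2 => ((-1 : ℂ)) ^ ((x i : ℕ))) * C
        = Matrix.diagonal (fun x : Fin n → Fin 2 => ((-1 : ℂ)) ^ ((x (π i) : ℕ)))) :
    ∃ (τ : Equiv.Perm (Fin n)) (d : (Fin n → Fin 2) → ℂ),
      (∀ x, ‖d x‖ = 1) ∧
      C = (Matrix.of fun x y : Fin n → Fin 2 => if x = y ∘ τ then (1 : ℂ) else 0) *
            Matrix.diagonal d := by
  have h1 : C * Cᴴ = 1 := hC.2
  have key : ∀ (i : Fin n) x y,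
      ((-1 : ℂ)) ^ (x i : ℕ) * C x y = C x y * ((-1 : ℂ)) ^ ((y (π i)) : ℕ) := by
    intro i x y
    have h2 : C * (Cᴴ * Matrix.diagonal (fun x : Fin n → Fin 2 => ((-1 : ℂ)) ^ ((x i : ℕ))) * C)
        = C * Matrix.diagonal (fun x : Fin n → Fin 2 => ((-1 : ℂ)) ^ ((x (π i) : ℕ))) :=
      congrArg _ (hconj i)
    rw [← mul_assoc, ← mul_assoc, h1, one_mul] at h2
    have h3 := congrFun (congrFun h2 x) y
    simpa [Matrix.diagonal_mul, Matrix.mul_diagonal] using h3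
  have hsupp : ∀ x y, C x y ≠ 0 → x = y ∘ π := by
    intro x y hne
    funext i
    apply neg_one_pow_fin2_inj
    have h := key i x y
    rw [mul_comm (C x y)] at h
    exact mul_right_cancel₀ hne h
  have hzero : ∀ x y, x ≠ y ∘ π → C x y = 0 := by
    intro x y hxy
    by_contra hne
    exact hxy (hsupp x y hne)
  refine ⟨π, fun y => C (y ∘ π) y, ?_, ?_⟩
  · intro y
    have hCC : Cᴴ * C = 1 := hC.1
    have h := congrFun (congrFun hCC y) y
    simp only [Matrix.mul_apply, Matrix.conjTranspose_apply, Matrix.one_apply_eq] at h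
    rw [Finset.sum_eq_single (y ∘ π)] at h
    · have := congrArg (‖·‖) h
      simp only [Complex.star_def, norm_mul, Complex.norm_conj, norm_one] at this
      show ‖C (y ∘ ⇑π) y‖ = 1
      nlinarith [norm_nonneg (C (y ∘ π) y)]
    · intro b _ hb
      rw [hzero b y hb]
      simp
    · intro hb
      exact absurd (Finset.mem_univ _) hb
  · ext x y
    rw [Matrix.mul_diagonal]
    simp only [Matrix.of_apply]
    by_cases hxy : x = y ∘ π
    · subst hxy; simp
    · simp [hxy, hzero x y hxy]
end

section
/- Let n ≥ 1, let A₁, A₂ be adjacency matrices on Fin n with graph states G₁ = |G_{A₁}⟩ and G₂ = |G_{A₂}⟩, and define vectors ψ₁, ψ₂ indexed by Fin 2 × (Fin n → Fin 2) by ψ_j(b,x) = (R(b)·R^n(x) + R_-(b)·G_j(x))/√2 for j = 1,2. Let C be a unitary matrix on this index type and let s be a real number with 0 ≤ s ≤ 10⁻⁵ such that |⟨R ⊗ R^n, C·(R_- ⊗ G₂)⟩| ≤ s and |⟨R_- ⊗ G₁, C·(R ⊗ R^n)⟩| ≤ s, where (w ⊗ φ)(b,x) = w(b)·φ(x). If |⟨ψ₁,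 C·ψ₂⟩| ≥ 0.99999, then |⟨R ⊗ R^n, C·(R ⊗ R^n)⟩|² ≥ 0.9999. -/
open Matrix
open scoped Classical

/-- The single-qubit state `|R⟩ = (|0⟩ + e^{iπ/8}|1⟩)/√2`. -/
noncomputable def Rvec : Fin 2 → ℂ :=
  ![1 / (Real.sqrt 2 : ℂ), Complex.exp (Real.pi * Complex.I / 8) / (Real.sqrt 2 : ℂ)]

/-- The single-qubit state `|R₋⟩ = (|0⟩ − e^{iπ/8}|1⟩)/√2`. -/
noncomputable def Rmvec : Fin 2 → ℂ :=
  ![1 / (Real.sqrt 2 : ℂ), -(Complex.exp (Real.pi * Complex.I / 8)) / (Real.sqrt 2 : ℂ)]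

/-- The product state `|R^n⟩`. -/
noncomputable def Rn {n : ℕ} : (Fin n → Fin 2) → ℂ := fun x => ∏ i, Rvec (x i)

/-- The graph state of an adjacency matrix `A`:
`G_A(x) = (−1)^{∑_{j<k} A_{jk} x_j x_k} / 2^{n/2}`. -/
noncomputable def graphState {n : ℕ} (A : Matrix (Fin n) (Fin n) ℝ) :
    (Fin n → Fin 2) → ℂ :=
  fun x => ((-1 : ℂ)) ^
      (∑ j : Fin n, ∑ k : Fin n,
        if j < k ∧ A j k = 1 ∧ x j = 1 ∧ x k = 1 then (1 : ℕ) else 0)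
    / ((Real.sqrt 2 : ℂ)) ^ n

/-- Tensor product of a one-qubit vector with an `n`-qubit vector. -/
noncomputable def tp {n : ℕ} (w : Fin 2 → ℂ) (φ : (Fin n → Fin 2) → ℂ) :
    Fin 2 × (Fin n → Fin 2) → ℂ :=
  fun p => w p.1 * φ p.2

/-- The inner product `⟨u, w⟩ = ∑ z conj(u z) · w z`. -/
noncomputable def inn {α : Type*} [Fintype α] (u w : α → ℂ) : ℂ :=
  ∑ z, (starRingEnd ℂ) (u z) * w z

lemma h2C : ((Real.sqrt 2 : ℝ) : ℂ) * ((Real.sqrt 2 : ℝ) : ℂ) = 2 := by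
  norm_cast
  rw [Real.mul_self_sqrt] <;> norm_num

lemma conj_exp : (starRingEnd ℂ) (Complex.exp (Real.pi * Complex.I / 8)) *
    Complex.exp (Real.pi * Complex.I / 8) = 1 := by
  rw [show ((Real.pi : ℂ) * Complex.I / 8) = ((Real.pi / 8 : ℝ) : ℂ) * Complex.I by
    push_cast; ring]
  rw [← Complex.exp_conj, _root_.map_mul, Complex.conj_ofReal, Complex.conj_I,
    ← Complex.exp_add]
  rw [show ((Real.pi / 8 : ℝ) : ℂ) * -Complex.I + ((Real.pi / 8 : ℝ) : ℂ) * Complex.I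
    = 0 by ring, Complex.exp_zero]

lemma conj_Rvec (b : Fin 2) : (starRingEnd ℂ) (Rvec b) * Rvec b = 1/2 := by
  fin_cases b
  · show (starRingEnd ℂ) (1 / (Real.sqrt 2 : ℂ)) * (1 / (Real.sqrt 2 : ℂ)) = 1/2
    rw [map_div₀, Complex.conj_ofReal, _root_.map_one, div_mul_div_comm, one_mul, h2C]
  · show (starRingEnd ℂ) (Complex.exp (Real.pi * Complex.I / 8) / (Real.sqrt 2 : ℂ)) *
        (Complex.exp (Real.pi * Complex.I / 8) / (Real.sqrt 2 : ℂ)) = 1/2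
    rw [map_div₀, Complex.conj_ofReal, div_mul_div_comm, conj_exp, h2C]

lemma conj_Rmvec (b : Fin 2) : (starRingEnd ℂ) (Rmvec b) * Rmvec b = 1/2 := by
  fin_cases b
  · show (starRingEnd ℂ) (1 / (Real.sqrt 2 : ℂ)) * (1 / (Real.sqrt 2 : ℂ)) = 1/2
    rw [map_div₀, Complex.conj_ofReal, _root_.map_one, div_mul_div_comm, one_mul, h2C]
  · show (starRingEnd ℂ) (-(Complex.exp (Real.pi * Complex.I / 8)) / (Real.sqrt 2 : ℂ)) *
        (-(Complex.exp (Real.pi * Complex.I / 8)) / (Real.sqrt 2 : ℂ)) = 1/2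
    rw [map_div₀, Complex.conj_ofReal, div_mul_div_comm, map_neg, neg_mul_neg, conj_exp, h2C]

lemma inn_Rn {n : ℕ} : inn (Rn (n := n)) Rn = 1 := by
  unfold inn Rn
  have : ∀ x : Fin n → Fin 2,
      (starRingEnd ℂ) (∏ i, Rvec (x i)) * ∏ i, Rvec (x i) = (1/2 : ℂ) ^ n := by
    intro x
    rw [map_prod, ← Finset.prod_mul_distrib]
    simp only [conj_Rvec]
    simp
  rw [Finset.sum_congr rfl fun x _ => this x, Finset.sum_const]
  simp only [Finset.card_univ, Fintype.card_fun, Fintype.card_fin, nsmul_eq_mul]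
  push_cast
  rw [one_div, inv_pow, mul_inv_cancel₀ (pow_ne_zero _ two_ne_zero)]

lemma inn_graphState {n : ℕ} (A : Matrix (Fin n) (Fin n) ℝ) :
    inn (graphState A) (graphState A) = 1 := by
  unfold inn graphState
  have : ∀ x : Fin n → Fin 2,
      (starRingEnd ℂ) ((-1 : ℂ) ^ (∑ j : Fin n, ∑ k : Fin n,
          if j < k ∧ A j k = 1 ∧ x j = 1 ∧ x k = 1 then (1 : ℕ) else 0) /
        ((Real.sqrt 2 : ℝ) : ℂ) ^ n) *
      ((-1 : ℂ) ^ (∑ j : Fin n, ∑ k : Fin n,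
          if j < k ∧ A j k = 1 ∧ x j = 1 ∧ x k = 1 then (1 : ℕ) else 0) /
        ((Real.sqrt 2 : ℝ) : ℂ) ^ n) = (1/2 : ℂ) ^ n := by
    intro x
    rw [map_div₀, map_pow, map_pow, Complex.conj_ofReal, map_neg, _root_.map_one,
      div_mul_div_comm, ← pow_add, ← pow_add]
    rw [Even.neg_one_pow ⟨_, rfl⟩]
    rw [show ((Real.sqrt 2 : ℝ) : ℂ) ^ (n + n) = (2 : ℂ) ^ n by
      rw [pow_add, ← mul_pow, h2C]]
    simp
  rw [Finset.sum_congr rfl fun x _ => this x, Finset.sum_const]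
  simp only [Finset.card_univ, Fintype.card_fun, Fintype.card_fin, nsmul_eq_mul]
  push_cast
  rw [one_div, inv_pow, mul_inv_cancel₀ (pow_ne_zero _ two_ne_zero)]

lemma inn_tp {n : ℕ} (w w' : Fin 2 → ℂ) (φ φ' : (Fin n → Fin 2) → ℂ) :
    inn (tp w φ) (tp w' φ') = inn w w' * inn φ φ' := by
  unfold inn tp
  rw [Fintype.sum_prod_type, Finset.sum_mul_sum]
  refine Finset.sum_congr rfl fun b _ => Finset.sum_congr rfl fun x _ => ?_
  simp only [_root_.map_mul]
  ring

lemma inn_tp_RvecRn {n : ℕ} : inn (tp (n := n) Rvec Rn) (tp Rvec Rn) = 1 := by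
  rw [inn_tp, inn_Rn, mul_one]
  unfold inn
  rw [Fin.sum_univ_two, conj_Rvec, conj_Rvec]
  norm_num

lemma inn_tp_RmG {n : ℕ} (A : Matrix (Fin n) (Fin n) ℝ) :
    inn (tp Rmvec (graphState A)) (tp Rmvec (graphState A)) = 1 := by
  rw [inn_tp, inn_graphState, mul_one]
  unfold inn
  rw [Fin.sum_univ_two, conj_Rmvec, conj_Rmvec]
  norm_num

lemma inn_eq_dot {α : Type*} [Fintype α] (u w : α → ℂ) : inn u w = star u ⬝ᵥ w := by
  simp [inn, dotProduct, Pi.star_apply, Complex.star_def]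

lemma inn_mulVec_self {α : Type*} [Fintype α] [DecidableEq α]
    (C : Matrix α α ℂ) (hC : C ∈ Matrix.unitaryGroup α ℂ) (v : α → ℂ) :
    inn (C.mulVec v) (C.mulVec v) = inn v v := by
  rw [inn_eq_dot, inn_eq_dot, Matrix.star_mulVec, ← Matrix.dotProduct_mulVec,
    Matrix.mulVec_mulVec, ← Matrix.star_eq_conjTranspose, hC.1, Matrix.one_mulVec]

lemma abs_inn_le_one {α : Type*} [Fintype α] (u w : α → ℂ)
    (hu : inn u u = 1) (hw : inn w w = 1) : ‖inn u w‖ ≤ 1 := by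
  let U : EuclideanSpace ℂ α := WithLp.toLp 2 u
  let W : EuclideanSpace ℂ α := WithLp.toLp 2 w
  have hUW : @inner ℂ _ _ U W = inn u w := by
    rw [PiLp.inner_apply]; unfold inn
    exact Finset.sum_congr rfl fun z _ => by simp [RCLike.inner_apply, U, W, mul_comm]
  have hU : ‖U‖ = 1 := by
    have : @inner ℂ _ _ U U = 1 := by
      rw [PiLp.inner_apply, ← hu]; unfold inn
      exact Finset.sum_congr rfl fun z _ => by
        simp [RCLike.inner_apply, U, mul_comm]
        rw [Complex.mul_conj, Complex.normSq_eq_norm_sq]; push_cast; ring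
    have h := @norm_eq_sqrt_re_inner ℂ _ _ _ _ U
    rw [this] at h
    simp at h
    exact h
  have hW : ‖W‖ = 1 := by
    have : @inner ℂ _ _ W W = 1 := by
      rw [PiLp.inner_apply, ← hw]; unfold inn
      exact Finset.sum_congr rfl fun z _ => by
        simp [RCLike.inner_apply, W, mul_comm]
        rw [Complex.mul_conj, Complex.normSq_eq_norm_sq]; push_cast; ring
    have h := @norm_eq_sqrt_re_inner ℂ _ _ _ _ W
    rw [this] at h
    simp at h
    exact h
  have := norm_inner_le_norm (𝕜 := ℂ) U W
  rw [hUW, hU, hW, mul_one] at this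
  exact this

lemma abs_inn_mulVec_le_one {α : Type*} [Fintype α] [DecidableEq α]
    (C : Matrix α α ℂ) (hC : C ∈ Matrix.unitaryGroup α ℂ) (u w : α → ℂ)
    (hu : inn u u = 1) (hw : inn w w = 1) :
    ‖inn u (C.mulVec w)‖ ≤ 1 :=
  abs_inn_le_one u _ hu (by rw [inn_mulVec_self C hC, hw])

lemma inn_add_right {α : Type*} [Fintype α] (u w w' : α → ℂ) :
    inn u (w + w') = inn u w + inn u w' := by
  simp [inn, mul_add, Finset.sum_add_distrib]

lemma inn_add_left {α : Type*} [Fintype α] (u u' w : α → ℂ) :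
    inn (u + u') w = inn u w + inn u' w := by
  simp [inn, add_mul, Finset.sum_add_distrib]

lemma inn_smul_left {α : Type*} [Fintype α] (c : ℂ) (u w : α → ℂ) :
    inn (c • u) w = (starRingEnd ℂ) c * inn u w := by
  simp [inn, Finset.mul_sum]; ring_nf

lemma inn_smul_right {α : Type*} [Fintype α] (c : ℂ) (u w : α → ℂ) :
    inn u (c • w) = c * inn u w := by
  simp [inn, Finset.mul_sum]; exact Finset.sum_congr rfl fun z _ => by ring

/-- in the Graph Isomorphism reduction, if the cross terms are
negligible and the overlap of `ψ₁` with `C ψ₂` is at least `0.99999`, then `C`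
approximately stabilizes `|R⟩ ⊗ |R^n⟩`. -/
theorem overlap_forces_Rn_stabilization
    {n : ℕ} (hn : 1 ≤ n) (A₁ A₂ : Matrix (Fin n) (Fin n) ℝ)
    (hA₁symm : A₁.IsSymm) (hA₂symm : A₂.IsSymm)
    (hA₁diag : ∀ i, A₁ i i = 0) (hA₂diag : ∀ i, A₂ i i = 0)
    (hA₁01 : ∀ i j, A₁ i j = 0 ∨ A₁ i j = 1) (hA₂01 : ∀ i j, A₂ i j = 0 ∨ A₂ i j = 1)
    (C : Matrix (Fin 2 × (Fin n → Fin 2)) (Fin 2 × (Fin n → Fin 2)) ℂ)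
    (hC : C ∈ Matrix.unitaryGroup (Fin 2 × (Fin n → Fin 2)) ℂ)
    (s : ℝ) (hs0 : 0 ≤ s) (hs : s ≤ 1 / 100000)
    (hcross₁ : ‖inn (tp Rvec Rn) (C.mulVec (tp Rmvec (graphState A₂)))‖ ≤ s)
    (hcross₂ : ‖inn (tp Rmvec (graphState A₁)) (C.mulVec (tp Rvec Rn))‖ ≤ s)
    (hmain : ‖inn
        (fun p => (Rvec p.1 * Rn p.2 + Rmvec p.1 * graphState A₁ p.2) / Real.sqrt 2)
        (C.mulVec
          (fun p => (Rvec p.1 * Rn p.2 + Rmvec p.1 * graphState A₂ p.2) / Real.sqrt 2))‖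
      ≥ 0.99999) :
    ‖inn (tp Rvec Rn) (C.mulVec (tp Rvec Rn))‖ ^ 2 ≥ 0.9999 := by
  set u : Fin 2 × (Fin n → Fin 2) → ℂ := tp Rvec Rn with hu
  set v₁ : Fin 2 × (Fin n → Fin 2) → ℂ := tp Rmvec (graphState A₁) with hv₁
  set v₂ : Fin 2 × (Fin n → Fin 2) → ℂ := tp Rmvec (graphState A₂) with hv₂
  have hψ₁ : (fun p : Fin 2 × (Fin n → Fin 2) =>
      (Rvec p.1 * Rn p.2 + Rmvec p.1 * graphState A₁ p.2) / (Real.sqrt 2 : ℂ))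
      = ((Real.sqrt 2 : ℝ) : ℂ)⁻¹ • (u + v₁) := by
    funext p
    simp only [Pi.smul_apply, Pi.add_apply, hu, hv₁, tp, smul_eq_mul]
    ring
  have hψ₂ : (fun p : Fin 2 × (Fin n → Fin 2) =>
      (Rvec p.1 * Rn p.2 + Rmvec p.1 * graphState A₂ p.2) / (Real.sqrt 2 : ℂ))
      = ((Real.sqrt 2 : ℝ) : ℂ)⁻¹ • (u + v₂) := by
    funext p
    simp only [Pi.smul_apply, Pi.add_apply, hu, hv₂, tp, smul_eq_mul]
    ring
  have hexp : inn
      (fun p : Fin 2 × (Fin n → Fin 2) =>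
        (Rvec p.1 * Rn p.2 + Rmvec p.1 * graphState A₁ p.2) / (Real.sqrt 2 : ℂ))
      (C.mulVec (fun p : Fin 2 × (Fin n → Fin 2) =>
        (Rvec p.1 * Rn p.2 + Rmvec p.1 * graphState A₂ p.2) / (Real.sqrt 2 : ℂ)))
      = (inn u (C.mulVec u) + inn u (C.mulVec v₂)
          + inn v₁ (C.mulVec u) + inn v₁ (C.mulVec v₂)) / 2 := by
    rw [hψ₁, hψ₂, Matrix.mulVec_smul, Matrix.mulVec_add, inn_smul_left, inn_smul_right,
      inn_add_left, inn_add_right, inn_add_right, map_inv₀, Complex.conj_ofReal]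
    have h : (((Real.sqrt 2 : ℝ) : ℂ))⁻¹ * (((Real.sqrt 2 : ℝ) : ℂ))⁻¹ = 2⁻¹ := by
      rw [← mul_inv, h2C]
    rw [← mul_assoc, h]
    ring
  have habs_b : ‖inn u (C.mulVec v₂)‖ ≤ s := hcross₁
  have habs_c : ‖inn v₁ (C.mulVec u)‖ ≤ s := hcross₂
  have habs_d : ‖inn v₁ (C.mulVec v₂)‖ ≤ 1 :=
    abs_inn_mulVec_le_one C hC _ _ (inn_tp_RmG A₁) (inn_tp_RmG A₂)
  have habs_a_le : ‖inn u (C.mulVec u)‖ ≤ 1 :=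
    abs_inn_mulVec_le_one C hC _ _ inn_tp_RvecRn inn_tp_RvecRn
  rw [hexp] at hmain
  have htri : ‖inn u (C.mulVec u) + inn u (C.mulVec v₂)
      + inn v₁ (C.mulVec u) + inn v₁ (C.mulVec v₂)‖
      ≤ ‖inn u (C.mulVec u)‖ + ‖inn u (C.mulVec v₂)‖
        + ‖inn v₁ (C.mulVec u)‖ + ‖inn v₁ (C.mulVec v₂)‖ := by
    calc _ ≤ ‖inn u (C.mulVec u) + inn u (C.mulVec v₂) + inn v₁ (C.mulVec u)‖
            + ‖inn v₁ (C.mulVec v₂)‖ := norm_add_le _ _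
    _ ≤ ‖inn u (C.mulVec u) + inn u (C.mulVec v₂)‖
            + ‖inn v₁ (C.mulVec u)‖ + ‖inn v₁ (C.mulVec v₂)‖ := by
          gcongr; exact norm_add_le _ _
    _ ≤ _ := by gcongr; exact norm_add_le _ _
  have hdiv : ‖(inn u (C.mulVec u) + inn u (C.mulVec v₂)
      + inn v₁ (C.mulVec u) + inn v₁ (C.mulVec v₂)) / 2‖
      = ‖inn u (C.mulVec u) + inn u (C.mulVec v₂)
      + inn v₁ (C.mulVec u) + inn v₁ (C.mulVec v₂)‖ / 2 := by
    rw [norm_div]; norm_num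
  rw [hdiv] at hmain
  have ha : ‖inn u (C.mulVec u)‖ ≥ 0.99996 := by
    nlinarith [norm_nonneg (inn u (C.mulVec u))]
  nlinarith [norm_nonneg (inn u (C.mulVec u))]
end
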